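/- arXiv:0711.4043 — 5 statements merged into one kernel-verified Lean document; each statement's English description precedes it below -/
import Mathlib

section
/- (Multivariate Hermite–Biehler) Let g, h ∈ ℝ[x₁,…,x_d] be polynomials with real coefficients and set f = g + i·h ∈ ℂ[x₁,…,x_d]. Then f is an upper polynomial if and only if g interlaces h, i.e. g + y·h ∈ U_{d+1} where y is a new variable. -/
/-- `f ∈ ℂ[x₁,…,x_d]` is an *upper polynomial* if it does not vanish when all
variables are given values in the open upper half plane.  (The zero polynomial
never satisfies this, so it is automatically excluded.) -/
def IsUpper {d : ℕ} (f : MvPolynomial (Fin d) ℂ) : Prop :=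
  ∀ σ : Fin d → ℂ, (∀ i, 0 < (σ i).im) → MvPolynomial.eval σ f ≠ 0

/-- A polynomial in the variables `x₁,…,x_d` and one distinguished variable `y`
(encoded as a univariate polynomial over `ℂ[x₁,…,x_d]`) is an upper polynomial
in `d+1` variables. -/
def IsUpperY {d : ℕ} (f : Polynomial (MvPolynomial (Fin d) ℂ)) : Prop :=
  ∀ (σ : Fin d → ℂ) (τ : ℂ), (∀ i, 0 < (σ i).im) → 0 < τ.im →
    Polynomial.eval₂ (MvPolynomial.eval σ) τ f ≠ 0

open Polynomial

lemma multiset_prod_le {s : Multiset ℂ} {f g : ℂ → ℝ} (h0 : ∀ x, 0 ≤ f x)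
    (h1 : ∀ x ∈ s, f x ≤ g x) : (s.map f).prod ≤ (s.map g).prod := by
  induction s using Multiset.induction_on with
  | empty => simp
  | cons a s ih =>
    simp only [Multiset.map_cons, Multiset.prod_cons]
    have hfs : (0:ℝ) ≤ (s.map f).prod := Multiset.prod_nonneg (by
      intro x hx; obtain ⟨y, hy, rfl⟩ := Multiset.mem_map.mp hx; exact h0 y)
    have := ih (fun x hx => h1 x (Multiset.mem_cons_of_mem hx))
    have ha := h1 a (Multiset.mem_cons_self a s)
    have ha0 := h0 a
    nlinarith

lemma abs_conj_sub_le {z r : ℂ} (hz : 0 < z.im) (hr : r.im ≤ 0) :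
    ‖(starRingEnd ℂ) z - r‖ ≤ ‖z - r‖ := by
  rw [Complex.norm_def, Complex.norm_def]
  apply Real.sqrt_le_sqrt
  simp only [Complex.normSq_apply, Complex.sub_re, Complex.sub_im, Complex.conj_re,
    Complex.conj_im]
  nlinarith

/-- If a univariate complex polynomial has no zeros in the open upper half plane,
then `|F(z̄)| ≤ |F(z)|` there. -/
lemma upper_eval_conj_le (F : Polynomial ℂ)
    (hF : ∀ w : ℂ, 0 < w.im → F.eval w ≠ 0) {z : ℂ} (hz : 0 < z.im) :
    ‖F.eval ((starRingEnd ℂ) z)‖ ≤ ‖F.eval z‖ := by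
  have hF0 : F ≠ 0 := by intro h; exact hF z hz (by simp [h])
  have hsplit := (IsAlgClosed.splits F).eq_prod_roots
  have hn : ∀ m : Multiset ℂ, ‖m.prod‖ = (m.map (‖·‖)).prod := fun m =>
    map_multiset_prod (normHom : ℂ →*₀ ℝ) m
  conv_lhs => rw [hsplit]
  conv_rhs => rw [hsplit]
  simp only [eval_mul, eval_C, eval_multiset_prod, Multiset.map_map, norm_mul,
    hn, Function.comp]
  gcongr
  apply multiset_prod_le (fun x => norm_nonneg _)
  intro r hr
  simp only [Function.comp, eval_sub, eval_X, eval_C]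
  apply abs_conj_sub_le hz
  by_contra hlt
  push_neg at hlt
  exact hF r hlt ((Polynomial.mem_roots hF0).mp hr)

lemma eval_subst {d : ℕ} (P : MvPolynomial (Fin d) ℝ) (a b : Fin d → ℝ) (t : ℂ) :
    Polynomial.eval t ((MvPolynomial.eval₂ Polynomial.C
        (fun j => Polynomial.C (a j) + Polynomial.C (b j) * Polynomial.X) P).map
        (algebraMap ℝ ℂ)) =
      MvPolynomial.eval (fun j => (a j : ℂ) + t * (b j : ℂ))
        (MvPolynomial.map (algebraMap ℝ ℂ) P) := by
  induction P using MvPolynomial.induction_on with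
  | C r => simp
  | add p q hp hq => simp [hp, hq]
  | mul_X p j hp =>
      simp only [MvPolynomial.eval₂_mul, MvPolynomial.eval₂_X, Polynomial.map_mul,
        Polynomial.eval_mul, hp, Polynomial.map_add, Polynomial.eval_add, Polynomial.eval_C,
        Polynomial.map_C, Polynomial.eval_X, Polynomial.map_X, map_mul,
        MvPolynomial.map_X, MvPolynomial.eval_mul, MvPolynomial.eval_X, Complex.coe_algebraMap]
      ring

lemma eval_conj {d : ℕ} (P : MvPolynomial (Fin d) ℝ) (σ : Fin d → ℂ) :
    MvPolynomial.eval (fun j => (starRingEnd ℂ) (σ j)) (MvPolynomial.map (algebraMap ℝ ℂ) P)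
      = (starRingEnd ℂ) (MvPolynomial.eval σ (MvPolynomial.map (algebraMap ℝ ℂ) P)) := by
  induction P using MvPolynomial.induction_on <;>
    simp [*, Complex.conj_ofReal]

lemma key_normSq (G H : ℂ) :
    Complex.normSq (G + Complex.I * H) - Complex.normSq (G - Complex.I * H)
      = 4 * (G * (starRingEnd ℂ) H).im := by
  simp [Complex.normSq_apply, Complex.mul_re, Complex.mul_im]
  ring

/-- The key step: if `g + i h` is upper then `Im (G(σ) ⋅ conj (H(σ))) ≥ 0` on the
open upper polydisc. -/
lemma key_im {d : ℕ} (g h : MvPolynomial (Fin d) ℝ)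
    (hf : IsUpper (MvPolynomial.map (algebraMap ℝ ℂ) g +
        MvPolynomial.C Complex.I * MvPolynomial.map (algebraMap ℝ ℂ) h))
    (σ : Fin d → ℂ) (hσ : ∀ i, 0 < (σ i).im) :
    0 ≤ (MvPolynomial.eval σ (MvPolynomial.map (algebraMap ℝ ℂ) g) *
      (starRingEnd ℂ) (MvPolynomial.eval σ (MvPolynomial.map (algebraMap ℝ ℂ) h))).im := by
  classical
  set a : Fin d → ℝ := fun j => (σ j).re with ha
  set b : Fin d → ℝ := fun j => (σ j).im with hb
  set sub : Fin d → Polynomial ℝ := fun j => Polynomial.C (a j) + Polynomial.C (b j) * Polynomial.X with hsub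
  set F : Polynomial ℂ :=
    (MvPolynomial.eval₂ Polynomial.C sub g).map (algebraMap ℝ ℂ) +
      Polynomial.C Complex.I * (MvPolynomial.eval₂ Polynomial.C sub h).map (algebraMap ℝ ℂ)
    with hF
  have hFeval : ∀ t : ℂ, F.eval t =
      MvPolynomial.eval (fun j => (a j : ℂ) + t * (b j : ℂ))
        (MvPolynomial.map (algebraMap ℝ ℂ) g +
          MvPolynomial.C Complex.I * MvPolynomial.map (algebraMap ℝ ℂ) h) := by
    intro t
    simp only [hF, hsub, Polynomial.eval_add, Polynomial.eval_mul, Polynomial.eval_C,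
      eval_subst, map_add, map_mul, MvPolynomial.eval_C]
  have hFup : ∀ w : ℂ, 0 < w.im → F.eval w ≠ 0 := by
    intro w hw
    rw [hFeval w]
    apply hf
    intro i
    simp only [Complex.add_im, Complex.ofReal_im, Complex.mul_im, Complex.ofReal_re,
      Complex.ofReal_im, zero_add, mul_zero, add_zero]
    exact mul_pos hw (hσ i)
  have habs := upper_eval_conj_le F hFup (z := Complex.I) (by simp)
  have hIσ : (fun j => (a j : ℂ) + Complex.I * (b j : ℂ)) = σ := by
    funext j
    rw [mul_comm]
    exact Complex.re_add_im (σ j)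
  have hcσ : (fun j => (a j : ℂ) + (starRingEnd ℂ) Complex.I * (b j : ℂ))
      = fun j => (starRingEnd ℂ) (σ j) := by
    funext j
    simp only [Complex.conj_I]
    apply Complex.ext <;> simp [ha, hb]
  set G := MvPolynomial.eval σ (MvPolynomial.map (algebraMap ℝ ℂ) g) with hG
  set H := MvPolynomial.eval σ (MvPolynomial.map (algebraMap ℝ ℂ) h) with hH
  have hFI : F.eval Complex.I = G + Complex.I * H := by
    rw [hFeval, hIσ]
    simp [map_add, map_mul, MvPolynomial.eval_C, hG, hH]
  have hFcI : F.eval ((starRingEnd ℂ) Complex.I)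
      = (starRingEnd ℂ) (G - Complex.I * H) := by
    rw [hFeval, hcσ]
    simp only [map_add, map_mul, MvPolynomial.eval_C, eval_conj, map_sub, map_mul,
      Complex.conj_I, Complex.conj_conj]
    ring
  rw [hFI, hFcI] at habs
  rw [Complex.norm_conj] at habs
  have hsq : Complex.normSq (G - Complex.I * H) ≤ Complex.normSq (G + Complex.I * H) := by
    rw [← Complex.sq_norm, ← Complex.sq_norm]
    exact pow_le_pow_left₀ (norm_nonneg _) habs 2
  have := key_normSq G H
  linarith

/-- Multivariate Hermite–Biehler: for real polynomials `g, h`, the complex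
polynomial `f = g + i·h` is an upper polynomial iff `g` interlaces `h`. -/
theorem hermite_biehler {d : ℕ} (g h : MvPolynomial (Fin d) ℝ) :
    IsUpper (MvPolynomial.map (algebraMap ℝ ℂ) g +
        MvPolynomial.C Complex.I * MvPolynomial.map (algebraMap ℝ ℂ) h) ↔
      IsUpperY (Polynomial.C (MvPolynomial.map (algebraMap ℝ ℂ) g) +
        Polynomial.X * Polynomial.C (MvPolynomial.map (algebraMap ℝ ℂ) h)) := by
  constructor
  · intro hf σ τ hσ hτ
    have hkey := key_im g h hf σ hσ
    set G := MvPolynomial.eval σ (MvPolynomial.map (algebraMap ℝ ℂ) g) with hG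
    set H := MvPolynomial.eval σ (MvPolynomial.map (algebraMap ℝ ℂ) h) with hH
    have hne : G + Complex.I * H ≠ 0 := by
      have := hf σ hσ
      simpa [map_add, map_mul, MvPolynomial.eval_C, hG, hH] using this
    simp only [Polynomial.eval₂_add, Polynomial.eval₂_mul, Polynomial.eval₂_X,
      Polynomial.eval₂_C]
    intro h0
    rw [← hG, ← hH] at h0
    clear_value G H
    by_cases hHz : H = 0
    · apply hne
      rw [hHz] at h0 ⊢
      simpa using h0
    · have hτval : τ = -G / H := by
        rw [eq_div_iff hHz]
        linear_combination h0
      have him : (G * (starRingEnd ℂ) H).im = G.im * H.re - G.re * H.im := by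
        simp [Complex.mul_im, Complex.conj_re, Complex.conj_im]; ring
      have hnormSq : 0 < Complex.normSq H := Complex.normSq_pos.mpr hHz
      have hτim : τ.im = -((G.im * H.re - G.re * H.im) / Complex.normSq H) := by
        rw [hτval]
        simp [Complex.div_im, Complex.neg_im, Complex.neg_re, Complex.normSq_apply]
        field_simp [Complex.normSq_apply]
        ring
      rw [him] at hkey
      rw [hτim] at hτ
      have : (G.im * H.re - G.re * H.im) / Complex.normSq H ≥ 0 :=
        div_nonneg hkey (le_of_lt hnormSq)
      linarith
  · intro hY σ hσ
    have := hY σ Complex.I hσ (by simp)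
    simp only [Polynomial.eval₂_add, Polynomial.eval₂_mul, Polynomial.eval₂_X,
      Polynomial.eval₂_C] at this
    simpa [map_add, map_mul, MvPolynomial.eval_C, mul_comm] using this
end

section
/- (Multivariate Obreschkoff theorem) Let f, g ∈ ℝ[x₁,…,x_d] be real upper polynomials (i.e. both lie in RU_d). Then the following are equivalent: (1) for all real α, β, the polynomial α·f + β·g is either zero or a real upper polynomial; (2) either f interlaces g (f + y·g ∈ U_{d+1}) or g interlaces f (g + y·f ∈ U_{d+1}). -/
namespace Obre

open MvPolynomial Complex Set

variable {d : ℕ}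

def UHP (d : ℕ) : Set (Fin d → ℂ) := {σ | ∀ i, 0 < (σ i).im}

lemma uhp_nonempty : (UHP d).Nonempty := ⟨fun _ => Complex.I, fun _ => by simp⟩

lemma uhp_open : IsOpen (UHP d) := by
  have : UHP d = ⋂ i, (fun σ : Fin d → ℂ => (σ i).im) ⁻¹' Ioi 0 := by
    ext σ; simp [UHP]
  rw [this]
  exact isOpen_iInter_of_finite fun i =>
    (isOpen_Ioi).preimage (Complex.continuous_im.comp (continuous_apply i))

lemma uhp_convex : Convex ℝ (UHP d) := by
  intro x hx y hy a b ha hb hab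
  intro i
  have : ((a • x + b • y) i).im = a * (x i).im + b * (y i).im := by
    simp [Complex.smul_im]
  rw [this]
  rcases eq_or_lt_of_le ha with h | h
  · have hb1 : b = 1 := by linarith
    simp [← h, hb1]; exact hy i
  · have h1 : 0 < a * (x i).im := mul_pos h (hx i)
    have h2 : 0 ≤ b * (y i).im := mul_nonneg hb (le_of_lt (hy i))
    linarith

lemma analyticOnNhd_eval (p : MvPolynomial (Fin d) ℂ) :
    AnalyticOnNhd ℂ (fun σ : Fin d → ℂ => eval σ p) univ := by
  induction p using MvPolynomial.induction_on with
  | C a => simpa using (analyticOnNhd_const : AnalyticOnNhd ℂ (fun _ : Fin d → ℂ => a) univ)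
  | add p q hp hq =>
      have : (fun σ : Fin d → ℂ => eval σ (p + q)) =
          fun σ => eval σ p + eval σ q := by funext σ; simp
      rw [this]; exact hp.add hq
  | mul_X p i hp =>
      have : (fun σ : Fin d → ℂ => eval σ (p * X i)) =
          fun σ => eval σ p * σ i := by funext σ; simp
      rw [this]
      exact hp.mul ((ContinuousLinearMap.proj i :
        (Fin d → ℂ) →L[ℂ] ℂ).analyticOnNhd univ)

lemma diff_eval (p : MvPolynomial (Fin d) ℂ) :
    Differentiable ℂ (fun σ : Fin d → ℂ => eval σ p) :=
  differentiableOn_univ.mp (analyticOnNhd_eval p).differentiableOn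

lemma eq_zero_of_eqOn_zero {p : MvPolynomial (Fin d) ℂ}
    (h : ∀ σ ∈ UHP d, eval σ p = 0) : p = 0 := by
  obtain ⟨σ₀, hσ₀⟩ := (uhp_nonempty (d := d))
  have h0 : (fun σ : Fin d → ℂ => eval σ p) =ᶠ[nhds σ₀] 0 :=
    Filter.eventuallyEq_of_mem (uhp_open.mem_nhds hσ₀) h
  have := (analyticOnNhd_eval p).eqOn_zero_of_preconnected_of_eventuallyEq_zero
    isPreconnected_univ (mem_univ σ₀) h0
  exact MvPolynomial.funext fun x => by simpa using this (mem_univ x)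

lemma pos_of_ne_zero {u : (Fin d → ℂ) → ℝ} (hc : ContinuousOn u (UHP d))
    (h0 : ∀ σ ∈ UHP d, u σ ≠ 0) {σ₁ σ₂ : Fin d → ℂ}
    (h1 : σ₁ ∈ UHP d) (h2 : σ₂ ∈ UHP d) (hpos : 0 < u σ₁) : 0 < u σ₂ := by
  by_contra hcon
  have hneg : u σ₂ < 0 := lt_of_le_of_ne (not_lt.mp hcon) (h0 σ₂ h2)
  set γ : ℝ → (Fin d → ℂ) := fun t => (1 - t) • σ₁ + t • σ₂ with hγ
  have hγmem : ∀ t ∈ Icc (0:ℝ) 1, γ t ∈ UHP d := by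
    intro t ht
    exact uhp_convex h1 h2 (by linarith [ht.2]) ht.1 (by ring)
  have hγcont : Continuous γ :=
    ((continuous_const.sub continuous_id).smul continuous_const).add
      (continuous_id.smul continuous_const)
  have hcomp : ContinuousOn (u ∘ γ) (Icc 0 1) :=
    hc.comp hγcont.continuousOn hγmem
  have hsub := intermediate_value_Icc' (zero_le_one) hcomp
  have hmem : (0:ℝ) ∈ Icc ((u ∘ γ) 1) ((u ∘ γ) 0) := by
    have e0 : γ 0 = σ₁ := by simp [hγ]
    have e1 : γ 1 = σ₂ := by simp [hγ]
    constructor <;> simp [Function.comp, e0, e1] <;> linarith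
  obtain ⟨t, ht, hzero⟩ := hsub hmem
  exact h0 (γ t) (hγmem t ht) hzero

lemma eval_map_smul (σ : Fin d → ℂ) (r : ℝ) (g : MvPolynomial (Fin d) ℝ) :
    eval σ (map (algebraMap ℝ ℂ) (r • g)) =
      (r : ℂ) * eval σ (map (algebraMap ℝ ℂ) g) := by
  rw [MvPolynomial.smul_eq_C_mul, map_mul, MvPolynomial.map_C]
  simp

lemma eval₂_CXC (A B : MvPolynomial (Fin d) ℂ) (σ : Fin d → ℂ) (τ : ℂ) :
    Polynomial.eval₂ (MvPolynomial.eval σ) τ (Polynomial.C A + Polynomial.X * Polynomial.C B) =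
      eval σ A + τ * eval σ B := by
  rw [Polynomial.eval₂_add, Polynomial.eval₂_mul, Polynomial.eval₂_C,
    Polynomial.eval₂_C, Polynomial.eval₂_X]

/-- Direction (2) ⟹ (1), one of the two symmetric cases. -/
lemma combo_of_interlace (f g : MvPolynomial (Fin d) ℝ)
    (hg : IsUpper (MvPolynomial.map (algebraMap ℝ ℂ) g))
    (hI : IsUpperY (Polynomial.C (MvPolynomial.map (algebraMap ℝ ℂ) f) +
        Polynomial.X * Polynomial.C (MvPolynomial.map (algebraMap ℝ ℂ) g)))
    (α β : ℝ) :
    α • f + β • g = 0 ∨ IsUpper (MvPolynomial.map (algebraMap ℝ ℂ) (α • f + β • g)) := by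
  set φ := algebraMap ℝ ℂ
  set F : (Fin d → ℂ) → ℂ := fun σ => eval σ (map φ f) with hF
  set G : (Fin d → ℂ) → ℂ := fun σ => eval σ (map φ g) with hG
  have hGne : ∀ σ ∈ UHP d, G σ ≠ 0 := fun σ hσ => hg σ hσ
  have hIy : ∀ σ ∈ UHP d, ∀ τ : ℂ, 0 < τ.im → F σ + τ * G σ ≠ 0 := by
    intro σ hσ τ hτ
    have := hI σ τ hσ hτ
    rwa [eval₂_CXC] at this
  set w : (Fin d → ℂ) → ℂ := fun σ => F σ / G σ with hw
  have him : ∀ σ ∈ UHP d, 0 ≤ (w σ).im := by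
    intro σ hσ
    by_contra hlt
    push_neg at hlt
    refine hIy σ hσ (-(w σ)) (by simpa using hlt) ?_
    have e1 : (w σ) * G σ = F σ := div_mul_cancel₀ _ (hGne σ hσ)
    rw [neg_mul, e1]; ring
  have hFd : Differentiable ℂ F := diff_eval _
  have hGd : Differentiable ℂ G := diff_eval _
  have hFA : AnalyticOnNhd ℂ F (UHP d) := (analyticOnNhd_eval _).mono (subset_univ _)
  have hGA : AnalyticOnNhd ℂ G (UHP d) := (analyticOnNhd_eval _).mono (subset_univ _)
  have hwA : AnalyticOnNhd ℂ w (UHP d) := by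
    rw [hw]; exact hFA.div hGA hGne
  by_cases hex : ∃ σ₀ ∈ UHP d, (w σ₀).im = 0
  · obtain ⟨σ₀, hσ₀, him0⟩ := hex
    have hden : ∀ σ ∈ UHP d, w σ + I ≠ 0 := by
      intro σ hσ hzero
      have h1 : (w σ + I).im = (w σ).im + 1 := by simp
      rw [hzero] at h1
      simp at h1
      linarith [him σ hσ]
    set h : (Fin d → ℂ) → ℂ := fun σ => (w σ - I) / (w σ + I) with hh
    have hhA : AnalyticOnNhd ℂ h (UHP d) := by
      rw [hh]
      exact (hwA.sub analyticOnNhd_const).div (hwA.add analyticOnNhd_const) hden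
    have hhdiff : DifferentiableOn ℂ h (UHP d) := hhA.differentiableOn
    have hnum_le : ∀ σ ∈ UHP d, ‖w σ - I‖ ≤ ‖w σ + I‖ := by
      intro σ hσ
      have h2 : ‖w σ - I‖ ^ 2 ≤ ‖w σ + I‖ ^ 2 := by
        rw [Complex.sq_norm, Complex.sq_norm, Complex.normSq_apply, Complex.normSq_apply]
        simp only [Complex.sub_re, Complex.sub_im, Complex.add_re, Complex.add_im,
          Complex.I_re, Complex.I_im]
        nlinarith [him σ hσ]
      nlinarith [norm_nonneg (w σ - I), norm_nonneg (w σ + I)]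
    have heq0 : ‖w σ₀ - I‖ = ‖w σ₀ + I‖ := by
      have h2 : ‖w σ₀ - I‖ ^ 2 = ‖w σ₀ + I‖ ^ 2 := by
        rw [Complex.sq_norm, Complex.sq_norm, Complex.normSq_apply, Complex.normSq_apply]
        simp only [Complex.sub_re, Complex.sub_im, Complex.add_re, Complex.add_im,
          Complex.I_re, Complex.I_im]
        nlinarith [him0]
      nlinarith [norm_nonneg (w σ₀ - I), norm_nonneg (w σ₀ + I), h2]
    have habs0 : ‖h σ₀‖ = 1 := by
      rw [hh]
      simp only [norm_div]
      rw [heq0]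
      exact div_self (norm_ne_zero_iff.mpr (hden σ₀ hσ₀))
    have hmax : IsMaxOn (norm ∘ h) (UHP d) σ₀ := by
      rw [isMaxOn_iff]
      intro σ hσ
      simp only [Function.comp_apply, habs0, hh, norm_div]
      rw [heq0, div_self (norm_ne_zero_iff.mpr (hden σ₀ hσ₀))]
      rw [div_le_one (lt_of_le_of_ne (norm_nonneg _)
        (Ne.symm (norm_ne_zero_iff.mpr (hden σ hσ))))]
      exact hnum_le σ hσ
    have hEq := Complex.eqOn_of_isPreconnected_of_isMaxOn_norm
      uhp_convex.isPreconnected uhp_open hhdiff hσ₀ hmax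
    have hc1 : h σ₀ ≠ 1 := by
      intro hc
      have h2' := (div_eq_one_iff_eq (hden σ₀ hσ₀)).mp hc
      have h2 : (-I : ℂ) = I := by linear_combination h2'
      have h3 := congrArg Complex.im h2
      norm_num at h3
    have hwconst : ∀ σ ∈ UHP d, w σ = w σ₀ := by
      intro σ hσ
      have e : ∀ ρ ∈ UHP d, w ρ * (1 - h σ₀) = I * (1 + h σ₀) := by
        intro ρ hρ
        have hρe : h ρ = h σ₀ := hEq hρ
        have hval : h ρ * (w ρ + I) = w ρ - I := by
          show (w ρ - I) / (w ρ + I) * (w ρ + I) = w ρ - I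
          exact div_mul_cancel₀ _ (hden ρ hρ)
        have : (w ρ - I) = h σ₀ * (w ρ + I) := by rw [← hρe, hval]
        linear_combination this
      have h1 := e σ hσ
      have h2 := e σ₀ hσ₀
      have hne : (1 : ℂ) - h σ₀ ≠ 0 := sub_ne_zero.mpr (Ne.symm hc1)
      exact mul_right_cancel₀ hne (h1.trans h2.symm)
    set r : ℝ := (w σ₀).re with hr
    have hw0 : w σ₀ = (r : ℂ) := by
      apply Complex.ext <;> simp [hr, him0]
    have hFrG : ∀ σ ∈ UHP d, F σ = (r : ℂ) * G σ := by
      intro σ hσ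
      have h1 : F σ / G σ = (r : ℂ) := by
        have := (hwconst σ hσ).trans hw0
        simp only [hw] at this
        exact this
      rw [div_eq_iff (hGne σ hσ)] at h1
      exact h1
    have hfg : f = r • g := by
      have hmap0 : map φ (f - r • g) = 0 := by
        apply eq_zero_of_eqOn_zero
        intro σ hσ
        rw [map_sub, map_sub, eval_map_smul]
        show F σ - (r : ℂ) * G σ = 0
        rw [hFrG σ hσ]
        ring
      have hinj : Function.Injective (map φ : MvPolynomial (Fin d) ℝ → MvPolynomial (Fin d) ℂ) :=
        MvPolynomial.map_injective φ (algebraMap ℝ ℂ).injective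
      have : f - r • g = 0 := hinj (by rw [hmap0, map_zero])
      exact sub_eq_zero.mp this
    have hcomb : α • f + β • g = (α * r + β) • g := by
      rw [hfg, smul_smul, ← add_smul]
    by_cases hco : α * r + β = 0
    · left; rw [hcomb, hco, zero_smul]
    · right
      intro σ hσ
      rw [hcomb, eval_map_smul]
      exact mul_ne_zero (by exact_mod_cast hco) (hGne σ hσ)
  · push_neg at hex
    have hpos : ∀ σ ∈ UHP d, 0 < (w σ).im :=
      fun σ hσ => lt_of_le_of_ne (him σ hσ) (Ne.symm (hex σ hσ))
    by_cases hab : α = 0 ∧ β = 0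
    · left; rw [hab.1, hab.2]; simp
    · right
      intro σ hσ hzero
      have he : eval σ (map φ (α • f + β • g)) = (α : ℂ) * F σ + (β : ℂ) * G σ := by
        rw [map_add, map_add, eval_map_smul, eval_map_smul]
      rw [he] at hzero
      have hG := hGne σ hσ
      have e1 : (w σ) * G σ = F σ := div_mul_cancel₀ _ hG
      have hlin : ((α : ℂ) * w σ + (β : ℂ)) * G σ = 0 := by
        rw [add_mul, mul_assoc, e1]; linear_combination hzero
      have hwz : (α : ℂ) * w σ + (β : ℂ) = 0 := (mul_eq_zero.mp hlin).resolve_right hG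
      have him' : ((α : ℂ) * w σ + (β : ℂ)).im = α * (w σ).im := by
        simp [Complex.add_im, Complex.mul_im]
      have hα : α = 0 := by
        have := congrArg Complex.im hwz
        rw [him'] at this
        simp only [Complex.zero_im] at this
        exact (mul_eq_zero.mp this).resolve_right (ne_of_gt (hpos σ hσ))
      have hβ : β = 0 := by
        rw [hα] at hwz
        simpa using hwz
      exact hab ⟨hα, hβ⟩


/-- Direction (1) ⟹ (2). -/
lemma interlace_of_combo (f g : MvPolynomial (Fin d) ℝ)
    (hf : IsUpper (MvPolynomial.map (algebraMap ℝ ℂ) f))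
    (hg : IsUpper (MvPolynomial.map (algebraMap ℝ ℂ) g))
    (h1 : ∀ α β : ℝ, α • f + β • g = 0 ∨
        IsUpper (MvPolynomial.map (algebraMap ℝ ℂ) (α • f + β • g))) :
    (IsUpperY (Polynomial.C (MvPolynomial.map (algebraMap ℝ ℂ) f) +
        Polynomial.X * Polynomial.C (MvPolynomial.map (algebraMap ℝ ℂ) g)) ∨
      IsUpperY (Polynomial.C (MvPolynomial.map (algebraMap ℝ ℂ) g) +
        Polynomial.X * Polynomial.C (MvPolynomial.map (algebraMap ℝ ℂ) f))) := by
  set φ := algebraMap ℝ ℂ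
  set F : (Fin d → ℂ) → ℂ := fun σ => eval σ (map φ f) with hF
  set G : (Fin d → ℂ) → ℂ := fun σ => eval σ (map φ g) with hG
  have hGne : ∀ σ ∈ UHP d, G σ ≠ 0 := fun σ hσ => hg σ hσ
  have hFne : ∀ σ ∈ UHP d, F σ ≠ 0 := fun σ hσ => hf σ hσ
  set w : (Fin d → ℂ) → ℂ := fun σ => F σ / G σ with hw
  by_cases hex : ∃ σ₀ ∈ UHP d, (w σ₀).im = 0
  · obtain ⟨σ₀, hσ₀, him0⟩ := hex
    set r : ℝ := (w σ₀).re with hr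
    have hw0 : w σ₀ = (r : ℂ) := by
      apply Complex.ext <;> simp [hr, him0]
    have he0 : F σ₀ = (r : ℂ) * G σ₀ := by
      have h1' : F σ₀ / G σ₀ = (r : ℂ) := by
        have := hw0
        simp only [hw] at this
        exact this
      rw [div_eq_iff (hGne σ₀ hσ₀)] at h1'
      exact h1'
    have hfg : f = r • g := by
      rcases h1 1 (-r) with h0 | hup
      · rw [one_smul, neg_smul, ← sub_eq_add_neg] at h0
        exact sub_eq_zero.mp h0
      · exfalso
        apply hup σ₀ hσ₀
        rw [map_add, map_add, eval_map_smul, eval_map_smul]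
        show ((1:ℝ) : ℂ) * F σ₀ + ((-r : ℝ) : ℂ) * G σ₀ = 0
        rw [he0]
        push_cast
        ring
    left
    intro σ τ hσ hτ
    rw [eval₂_CXC]
    show F σ + τ * G σ ≠ 0
    have e2 : F σ = (r : ℂ) * G σ := by
      show eval σ (map φ f) = (r : ℂ) * G σ
      rw [hfg, eval_map_smul]
    rw [e2, ← add_mul]
    apply mul_ne_zero _ (hGne σ hσ)
    intro hz
    have := congrArg Complex.im hz
    simp at this
    linarith
  · push_neg at hex
    have hwcont : ContinuousOn w (UHP d) := by
      rw [hw]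
      exact ContinuousOn.div (diff_eval _).continuous.continuousOn
        (diff_eval _).continuous.continuousOn hGne
    have hwc : ContinuousOn (fun σ => (w σ).im) (UHP d) :=
      Complex.continuous_im.comp_continuousOn hwcont
    have hstar : (fun _ : Fin d => I) ∈ UHP d := fun _ => by simp
    by_cases hp : 0 < (w (fun _ => I)).im
    · left
      have hall : ∀ σ ∈ UHP d, 0 < (w σ).im :=
        fun σ hσ => pos_of_ne_zero hwc (fun ρ hρ => hex ρ hρ) hstar hσ hp
      intro σ τ hσ hτ
      rw [eval₂_CXC]
      show F σ + τ * G σ ≠ 0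
      have e1 : (w σ) * G σ = F σ := div_mul_cancel₀ _ (hGne σ hσ)
      intro hz
      have hz' : (w σ + τ) * G σ = 0 := by
        rw [add_mul, e1]; linear_combination hz
      rcases mul_eq_zero.mp hz' with h | h
      · have him2 : 0 < (w σ + τ).im := by
          rw [Complex.add_im]
          have := hall σ hσ
          linarith
        rw [h] at him2; simp at him2
      · exact hGne σ hσ h
    · right
      have hneg : (w (fun _ => I)).im < 0 :=
        lt_of_le_of_ne (not_lt.mp hp) (hex _ hstar)
      have hall : ∀ σ ∈ UHP d, (w σ).im < 0 := by
        intro σ hσ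
        have hkey := pos_of_ne_zero (u := fun σ => -(w σ).im) hwc.neg
          (fun ρ hρ => by simpa using hex ρ hρ) hstar hσ
          (show 0 < -(w fun _ => I).im by linarith)
        have h5 : 0 < -(w σ).im := hkey
        linarith
      intro σ τ hσ hτ
      rw [eval₂_CXC]
      show G σ + τ * F σ ≠ 0
      have hFσ := hFne σ hσ
      have hwne : w σ ≠ 0 := by
        intro h0
        have := hall σ hσ
        rw [h0] at this
        simp at this
      have e1 : (w σ)⁻¹ * F σ = G σ := by
        have h2 : (w σ)⁻¹ = G σ / F σ := by
          simp only [hw]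
          exact inv_div _ _
        rw [h2, div_mul_cancel₀ _ hFσ]
      intro hz
      have hz' : ((w σ)⁻¹ + τ) * F σ = 0 := by
        rw [add_mul, e1]; linear_combination hz
      rcases mul_eq_zero.mp hz' with h | h
      · have him2 : 0 < ((w σ)⁻¹ + τ).im := by
          rw [Complex.add_im, Complex.inv_im]
          have hns : 0 < Complex.normSq (w σ) := Complex.normSq_pos.mpr hwne
          have h3 := hall σ hσ
          have h4 : 0 < -(w σ).im / Complex.normSq (w σ) := div_pos (by linarith) hns
          linarith
        rw [h] at him2; simp at him2
      · exact hFσ h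

end Obre

/-- Multivariate Obreschkoff theorem: for real upper polynomials `f, g`, all real
linear combinations `α·f + β·g` are zero or real upper polynomials iff `f`
interlaces `g` or `g` interlaces `f`. -/
theorem obreschkoff {d : ℕ} (f g : MvPolynomial (Fin d) ℝ)
    (hf : IsUpper (MvPolynomial.map (algebraMap ℝ ℂ) f))
    (hg : IsUpper (MvPolynomial.map (algebraMap ℝ ℂ) g)) :
    (∀ α β : ℝ, α • f + β • g = 0 ∨
        IsUpper (MvPolynomial.map (algebraMap ℝ ℂ) (α • f + β • g))) ↔
      (IsUpperY (Polynomial.C (MvPolynomial.map (algebraMap ℝ ℂ) f) +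
          Polynomial.X * Polynomial.C (MvPolynomial.map (algebraMap ℝ ℂ) g)) ∨
        IsUpperY (Polynomial.C (MvPolynomial.map (algebraMap ℝ ℂ) g) +
          Polynomial.X * Polynomial.C (MvPolynomial.map (algebraMap ℝ ℂ) f))) := by
  constructor
  · intro h1
    exact Obre.interlace_of_combo f g hf hg h1
  · intro h2 α β
    rcases h2 with h | h
    · exact Obre.combo_of_interlace f g hg h α β
    · rcases Obre.combo_of_interlace g f hf h β α with h0 | hup
      · left
        rw [add_comm (β • g) (α • f)] at h0
        exact h0
      · right
        rw [add_comm (β • g) (α • f)] at hup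
        exact hup
end

section
/- Let a, b, c, d be real numbers, not all zero. The polynomial f(x, y) = a + b·x + c·y + d·x·y is an upper polynomial in two variables (i.e. f(σ, τ) ≠ 0 whenever Im σ > 0 and Im τ > 0) if and only if b·c − a·d ≥ 0. -/
lemma key_im_s17 (a b c d : ℝ) (z w : ℂ)
    (h : (a : ℂ) + b * z + c * w + d * z * w = 0) :
    z.im * Complex.normSq ((b : ℂ) + d * w) = (a * d - b * c) * w.im := by
  have hre := congrArg Complex.re h
  have him := congrArg Complex.im h
  simp [Complex.add_re, Complex.add_im, Complex.mul_re, Complex.mul_im] at hre him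
  simp [Complex.normSq_apply, Complex.add_re, Complex.add_im, Complex.mul_re,
    Complex.mul_im]
  linear_combination (b + d * w.re) * him - d * w.im * hre

/-- For real `a, b, c, d`, not all zero, the polynomial `a + b·x + c·y + d·x·y`
is an upper polynomial in two variables iff `b·c − a·d ≥ 0`. -/
theorem multiaffine_isUpper_iff (a b c d : ℝ)
    (h : ¬(a = 0 ∧ b = 0 ∧ c = 0 ∧ d = 0)) :
    IsUpper (MvPolynomial.C ((a : ℂ)) +
        MvPolynomial.C ((b : ℂ)) * MvPolynomial.X 0 +
        MvPolynomial.C ((c : ℂ)) * MvPolynomial.X 1 +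
        MvPolynomial.C ((d : ℂ)) * MvPolynomial.X 0 * MvPolynomial.X 1 :
        MvPolynomial (Fin 2) ℂ) ↔
      b * c - a * d ≥ 0 := by
  
  constructor
  · intro hup
    by_contra hlt
    push_neg at hlt
    have hW : (b : ℂ) + d * Complex.I ≠ 0 := by
      intro h0
      have h1 := congrArg Complex.re h0
      have h2 := congrArg Complex.im h0
      simp [Complex.add_re, Complex.add_im, Complex.mul_re, Complex.mul_im] at h1 h2
      rw [h1, h2] at hlt
      simp at hlt
    set z : ℂ := -((a : ℂ) + c * Complex.I) / ((b : ℂ) + d * Complex.I) with hz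
    have heq : (a : ℂ) + b * z + c * Complex.I + d * z * Complex.I = 0 := by
      have hzW : z * ((b : ℂ) + d * Complex.I) = -((a : ℂ) + c * Complex.I) := by
        rw [hz]; exact div_mul_cancel₀ _ hW
      linear_combination hzW
    have him := key_im_s17 a b c d z Complex.I heq
    have hnsq : 0 < Complex.normSq ((b : ℂ) + d * Complex.I) :=
      Complex.normSq_pos.mpr hW
    have hzim : 0 < z.im := by
      simp [Complex.I_im] at him
      nlinarith
    have := hup ![z, Complex.I] (by
      intro i
      fin_cases i <;> simp [hzim])
    apply this
    simp [MvPolynomial.eval_add, MvPolynomial.eval_mul, MvPolynomial.eval_C,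
      MvPolynomial.eval_X]
    linear_combination heq
  · intro hge σ hσ heval
    simp [MvPolynomial.eval_add, MvPolynomial.eval_mul, MvPolynomial.eval_C,
      MvPolynomial.eval_X] at heval
    have heq : (a : ℂ) + b * σ 0 + c * σ 1 + d * σ 0 * σ 1 = 0 := by
      linear_combination heval
    have him := key_im_s17 a b c d (σ 0) (σ 1) heq
    have h0 := hσ 0
    have h1 := hσ 1
    have hnsq : Complex.normSq ((b : ℂ) + d * σ 1) = 0 := by
      rcases lt_or_eq_of_le (Complex.normSq_nonneg ((b : ℂ) + d * σ 1)) with hp | hp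
      · nlinarith
      · exact hp.symm
    have hW : (b : ℂ) + d * σ 1 = 0 := by
      rwa [Complex.normSq_eq_zero] at hnsq
    have hWre := congrArg Complex.re hW
    have hWim := congrArg Complex.im hW
    simp [Complex.add_re, Complex.add_im, Complex.mul_re, Complex.mul_im] at hWre hWim
    have hd : d = 0 := by
      rcases hWim with h' | h'
      · exact h'
      · exact absurd h' (ne_of_gt h1)
    have hb : b = 0 := by rw [hd] at hWre; linarith
    rw [hd, hb] at heq
    have hre := congrArg Complex.re heq
    have him2 := congrArg Complex.im heq
    simp [Complex.add_re, Complex.add_im, Complex.mul_re, Complex.mul_im] at hre him2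
    have hc : c = 0 := by
      rcases him2 with h' | h'
      · exact h'
      · exact absurd h' (ne_of_gt h1)
    have ha : a = 0 := by rw [hc] at hre; linarith
    exact h ⟨ha, hb, hc, hd⟩
end

section
/- Let f(x, y) = Σ_{i,j} a_{i,j}·xⁱ·yʲ be a real upper polynomial in two variables (f ∈ RU₂). Then for all integers r, s ≥ 0 the coefficients satisfy the inequality a_{r,s}·a_{r+1,s+1} ≤ a_{r+1,s}·a_{r,s+1}. -/
open Polynomial Complex

noncomputable section

/-- If all roots of `p` avoid the open upper half plane, the logarithmic derivative
has nonpositive imaginary part on the closed upper half plane (where `p ≠ 0`). -/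
lemma aux_logderiv_im :
    ∀ (n : ℕ) (p : Polynomial ℂ), p.natDegree ≤ n →
      (∀ z : ℂ, 0 < z.im → p.eval z ≠ 0) →
      ∀ z : ℂ, 0 ≤ z.im → p.eval z ≠ 0 →
        ((p.derivative.eval z) / (p.eval z)).im ≤ 0 := by
  intro n
  induction n with
  | zero =>
    intro p hdeg _ z _ _
    have : p.natDegree = 0 := Nat.le_zero.mp hdeg
    rw [p.eq_C_of_natDegree_eq_zero this]
    simp
  | succ n ih =>
    intro p hdeg hp z hz hpz
    by_cases h0 : p.natDegree = 0
    · rw [p.eq_C_of_natDegree_eq_zero h0]; simp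
    · -- p has a root r with im r ≤ 0
      have hdeg' : p.degree ≠ 0 := by
        intro h
        exact h0 (natDegree_eq_zero_iff_degree_le_zero.mpr (le_of_eq h))
      obtain ⟨r, hr⟩ := IsAlgClosed.exists_root p hdeg'
      have hrim : r.im ≤ 0 := by
        by_contra h
        exact hp r (lt_of_not_ge h) hr
      obtain ⟨q, hq⟩ := dvd_iff_isRoot.mpr hr
      have hqz : (X - C r).eval z * q.eval z ≠ 0 := by
        rw [← eval_mul, ← hq]; exact hpz
      have hzr : z - r ≠ 0 := by
        intro h
        apply hqz
        simp [sub_eq_zero.mp h]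
      have hqz' : q.eval z ≠ 0 := by
        intro h; exact hqz (by simp [h])
      have hq0 : q ≠ 0 := fun h => hqz' (by simp [h])
      have hXr : (X - C r : Polynomial ℂ) ≠ 0 := X_sub_C_ne_zero r
      have hqdeg : q.natDegree ≤ n := by
        have := natDegree_mul hXr hq0
        rw [← hq, natDegree_X_sub_C] at this
        omega
      have hqup : ∀ w : ℂ, 0 < w.im → q.eval w ≠ 0 := by
        intro w hw hwe
        exact hp w hw (by rw [hq]; simp [hwe])
      have ihq := ih q hqdeg hqup z hz hqz'
      have hder : p.derivative = q + (X - C r) * q.derivative := by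
        rw [hq, derivative_mul]
        simp
      have keyeq : (p.derivative.eval z) / (p.eval z)
          = (z - r)⁻¹ + (q.derivative.eval z) / (q.eval z) := by
        rw [hder, hq]
        simp only [eval_add, eval_mul, eval_sub, eval_X, eval_C]
        field_simp
      rw [keyeq]
      have h1 : ((z - r)⁻¹).im ≤ 0 := by
        rw [inv_im]
        apply div_nonpos_of_nonpos_of_nonneg
        · simp only [sub_im, neg_nonpos]; linarith
        · exact normSq_nonneg _
      simpa using add_nonpos h1 ihq

/-- Strict version in the open upper half plane for nonconstant `p`. -/
lemma aux_logderiv_im_neg (p : Polynomial ℂ) (h0 : p.natDegree ≠ 0)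
    (hp : ∀ z : ℂ, 0 < z.im → p.eval z ≠ 0)
    (z : ℂ) (hz : 0 < z.im) :
    ((p.derivative.eval z) / (p.eval z)).im < 0 := by
  have hdeg' : p.degree ≠ 0 := by
    intro h
    exact h0 (natDegree_eq_zero_iff_degree_le_zero.mpr (le_of_eq h))
  obtain ⟨r, hr⟩ := IsAlgClosed.exists_root p hdeg'
  have hrim : r.im ≤ 0 := by
    by_contra h
    exact hp r (lt_of_not_ge h) hr
  obtain ⟨q, hq⟩ := dvd_iff_isRoot.mpr hr
  have hpz : p.eval z ≠ 0 := hp z hz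
  have hqz : (X - C r).eval z * q.eval z ≠ 0 := by
    rw [← eval_mul, ← hq]; exact hpz
  have hzr : z - r ≠ 0 := by
    intro h; apply hqz; simp [sub_eq_zero.mp h]
  have hqz' : q.eval z ≠ 0 := by
    intro h; exact hqz (by simp [h])
  have hqup : ∀ w : ℂ, 0 < w.im → q.eval w ≠ 0 := by
    intro w hw hwe
    exact hp w hw (by rw [hq]; simp [hwe])
  have ihq := aux_logderiv_im q.natDegree q le_rfl hqup z (le_of_lt hz) hqz'
  have hder : p.derivative = q + (X - C r) * q.derivative := by
    rw [hq, derivative_mul]; simp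
  have keyeq : (p.derivative.eval z) / (p.eval z)
      = (z - r)⁻¹ + (q.derivative.eval z) / (q.eval z) := by
    rw [hder, hq]
    simp only [eval_add, eval_mul, eval_sub, eval_X, eval_C]
    field_simp
  rw [keyeq]
  have h1 : ((z - r)⁻¹).im < 0 := by
    rw [inv_im]
    apply div_neg_of_neg_of_pos
    · simp only [sub_im]
      linarith
    · rw [normSq_pos]; exact hzr
  have := add_lt_add_of_lt_of_le h1 ihq
  simpa using this

/-- "Good" polynomials: zero or nonvanishing on the open upper half plane. -/
def GoodP (p : Polynomial ℂ) : Prop :=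
  p = 0 ∨ ∀ z : ℂ, 0 < z.im → p.eval z ≠ 0

lemma goodP_derivative {p : Polynomial ℂ} (hp : GoodP p) : GoodP p.derivative := by
  rcases hp with h | h
  · left; rw [h]; simp
  · by_cases h0 : p.natDegree = 0
    · left
      rw [p.eq_C_of_natDegree_eq_zero h0]
      simp
    · right
      intro z hz he
      have := aux_logderiv_im_neg p h0 h z hz
      rw [he] at this
      simp at this

lemma goodP_iterate {p : Polynomial ℂ} (hp : GoodP p) (k : ℕ) :
    GoodP (derivative^[k] p) := by
  induction k with
  | zero => simpa using hp
  | succ k ih => rw [Function.iterate_succ_apply']; exact goodP_derivative ih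

/-- Hermite–Biehler type inequality at the real point `0`. -/
lemma aux_hb {p : Polynomial ℂ} (hp : GoodP p) :
    0 ≤ -((p.derivative.eval 0) * (starRingEnd ℂ) (p.eval 0)).im := by
  rcases hp with h | h
  · rw [h]; simp
  · by_cases h0 : p.eval 0 = 0
    · rw [h0]; simp
    · have him := aux_logderiv_im p.natDegree p le_rfl h 0 (by simp) h0
      set a := p.derivative.eval 0
      set b := p.eval 0
      have key : a * (starRingEnd ℂ) b = (a / b) * ((normSq b : ℝ) : ℂ) := by
        rw [← mul_conj b]
        field_simp
      rw [key]
      have : ((a / b) * ((normSq b : ℝ) : ℂ)).im = (a / b).im * normSq b := by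
        simp [Complex.mul_im]
      rw [this]
      have := mul_nonpos_of_nonpos_of_nonneg him (normSq_nonneg b)
      linarith


open Finset



/-- The complex modulus as an absolute value (compatibility wrapper). -/
def Complex.abs : AbsoluteValue ℂ ℝ := IsAbsoluteValue.toAbsoluteValue (norm : ℂ → ℝ)

lemma Complex.abs_apply' (z : ℂ) : Complex.abs z = ‖z‖ := rfl

lemma Complex.abs_ofReal (x : ℝ) : Complex.abs (x : ℂ) = |x| := by
  rw [Complex.abs_apply', Complex.norm_real, Real.norm_eq_abs]

lemma Complex.abs_I : Complex.abs I = 1 := by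
  rw [Complex.abs_apply', Complex.norm_I]

lemma Complex.abs_im_le_abs (z : ℂ) : |z.im| ≤ Complex.abs z := Complex.abs_im_le_norm z

namespace CQI

/-- The exponent finsupp of the monomial `x^i y^j`. -/
def emb (p : ℕ × ℕ) : Fin 2 →₀ ℕ := Finsupp.single 0 p.1 + Finsupp.single 1 p.2

lemma emb0 (p : ℕ × ℕ) : emb p 0 = p.1 := by
  simp [emb, Finsupp.single_apply]

lemma emb1 (p : ℕ × ℕ) : emb p 1 = p.2 := by
  rw [emb, Finsupp.add_apply, Finsupp.single_apply, Finsupp.single_apply]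
  norm_num

lemma dsum (d : Fin 2 →₀ ℕ) : (d.sum fun _ e => e) = d 0 + d 1 := by
  rw [Finsupp.sum]
  rw [Finset.sum_subset (Finset.subset_univ d.support)
    (by intro x _ hx; simpa [Finsupp.mem_support_iff] using hx)]
  exact Fin.sum_univ_two d

lemma d_eq_emb (d : Fin 2 →₀ ℕ) : d = emb (d 0, d 1) := by
  ext i
  match i with
  | 0 => rw [emb0]
  | 1 => rw [emb1]

variable (f : MvPolynomial (Fin 2) ℝ)

def Kb : ℕ := f.totalDegree + 2

def av (i j : ℕ) : ℝ := f.coeff (emb (i, j))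

def Q (j : ℕ) : Polynomial ℝ :=
  ∑ i ∈ Finset.range (Kb f), Polynomial.C (av f i j) * Polynomial.X ^ i

def Qc (j : ℕ) : Polynomial ℂ := (Q f j).map (algebraMap ℝ ℂ)

lemma azero {i j : ℕ} (h : f.totalDegree < i + j) : av f i j = 0 := by
  apply MvPolynomial.coeff_eq_zero_of_totalDegree_lt
  have h2 : ∑ k ∈ (emb (i, j)).support, (emb (i, j)) k = (emb (i,j)).sum fun _ e => e := rfl
  rw [h2, dsum, emb0, emb1]
  exact h

lemma coeffQ (i j : ℕ) : (Q f j).coeff i = av f i j := by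
  rw [Q, finset_sum_coeff]
  by_cases hi : i < Kb f
  · rw [Finset.sum_eq_single i]
    · simp
    · intro b _ hb
      simp [coeff_C_mul, coeff_X_pow, (Ne.symm hb)]
    · intro h; exact absurd (Finset.mem_range.mpr hi) h
  · have h1 : av f i j = 0 := azero f (by unfold Kb at hi; omega)
    rw [h1]
    apply Finset.sum_eq_zero
    intro b hb
    have hbi : b ≠ i := by
      intro h; rw [h] at hb; exact hi (Finset.mem_range.mp hb)
    simp [coeff_C_mul, coeff_X_pow, Ne.symm hbi]

lemma Qzero {j : ℕ} (h : f.totalDegree < j) : Q f j = 0 := by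
  ext i
  rw [coeffQ]
  simp [azero f (lt_of_lt_of_le h (Nat.le_add_left j i))]

lemma natDegree_Q_le (j : ℕ) : (Q f j).natDegree ≤ f.totalDegree + 1 := by
  apply natDegree_sum_le_of_forall_le
  intro i hi
  apply le_trans (natDegree_C_mul_le _ _)
  simpa using (show i ≤ f.totalDegree + 1 by have := Finset.mem_range.mp hi; unfold Kb at this; omega)

lemma natDegree_Qc_le (j : ℕ) : (Qc f j).natDegree ≤ f.totalDegree + 1 :=
  le_trans natDegree_map_le (natDegree_Q_le f j)

lemma evalQc (z : ℂ) (j : ℕ) :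
    (Qc f j).eval z = ∑ i ∈ Finset.range (Kb f), ((av f i j : ℝ) : ℂ) * z ^ i := by
  simp [Qc, Q, Polynomial.map_sum, Polynomial.map_mul, Polynomial.map_C, Polynomial.map_pow,
    Polynomial.map_X, eval_finset_sum, Complex.coe_algebraMap]

lemma coeffQc (i j : ℕ) : (Qc f j).coeff i = ((av f i j : ℝ) : ℂ) := by
  rw [Qc, coeff_map, coeffQ]
  rfl

/-- Workhorse: evaluation of `f` as a double sum. -/
lemma evalF (z w : ℂ) :
    MvPolynomial.eval ![z, w] (MvPolynomial.map (algebraMap ℝ ℂ) f)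
      = ∑ j ∈ Finset.range (Kb f), (Qc f j).eval z * w ^ j := by
  rw [MvPolynomial.eval_map, MvPolynomial.eval₂_eq']
  classical
  have hinj : Set.InjOn emb ((Finset.range (Kb f) ×ˢ Finset.range (Kb f)) : Finset (ℕ × ℕ)) := by
    intro p _ q _ h
    have h0 : emb p 0 = emb q 0 := by rw [h]
    have h1 : emb p 1 = emb q 1 := by rw [h]
    rw [emb0, emb0] at h0
    rw [emb1, emb1] at h1
    exact Prod.ext h0 h1
  have hsub : f.support ⊆ (Finset.range (Kb f) ×ˢ Finset.range (Kb f)).image emb := by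
    intro d hd
    have hle := MvPolynomial.le_totalDegree hd
    rw [dsum] at hle
    apply Finset.mem_image.mpr
    refine ⟨(d 0, d 1), ?_, (d_eq_emb d).symm⟩
    rw [Finset.mem_product]
    constructor <;> (rw [Finset.mem_range]; unfold Kb; omega)
  calc ∑ d ∈ f.support, (algebraMap ℝ ℂ) (f.coeff d) * ∏ i, (![z, w] : Fin 2 → ℂ) i ^ d i
      = ∑ d ∈ (Finset.range (Kb f) ×ˢ Finset.range (Kb f)).image emb,
          (algebraMap ℝ ℂ) (f.coeff d) * (z ^ d 0 * w ^ d 1) := by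
        rw [Finset.sum_subset hsub]
        · apply Finset.sum_congr rfl
          intro d _
          rw [Fin.prod_univ_two]
          simp
        · intro d _ hd
          have : f.coeff d = 0 := by
            by_contra h
            exact hd (MvPolynomial.mem_support_iff.mpr h)
          simp [this]
    _ = ∑ p ∈ Finset.range (Kb f) ×ˢ Finset.range (Kb f),
          ((av f p.1 p.2 : ℝ) : ℂ) * (z ^ p.1 * w ^ p.2) := by
        rw [Finset.sum_image hinj]
        apply Finset.sum_congr rfl
        intro p _
        rw [emb0, emb1]
        rw [av]
        simp [Complex.coe_algebraMap]
    _ = ∑ j ∈ Finset.range (Kb f), (Qc f j).eval z * w ^ j := by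
        rw [Finset.sum_product]
        rw [Finset.sum_comm]
        apply Finset.sum_congr rfl
        intro j _
        rw [evalQc, Finset.sum_mul]
        apply Finset.sum_congr rfl
        intro i _
        ring

lemma abs_multiset_prod (m : Multiset ℂ) :
    Complex.abs m.prod = (m.map Complex.abs).prod := by
  induction m using Multiset.induction_on with
  | empty => simp
  | cons a s ih => simp [ih]

lemma prod_map_nonneg (s : Multiset ℂ) (g : ℂ → ℝ) (hg : ∀ r ∈ s, 0 ≤ g r) :
    0 ≤ (s.map g).prod := by
  induction s using Multiset.induction_on with
  | empty => simp
  | cons a s ih =>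
    simp only [Multiset.map_cons, Multiset.prod_cons]
    exact mul_nonneg (hg a (Multiset.mem_cons_self a s))
      (ih fun r hr => hg r (Multiset.mem_cons_of_mem hr))

lemma prod_map_le (s : Multiset ℂ) (g h : ℂ → ℝ) (hg : ∀ r ∈ s, 0 ≤ g r)
    (hgh : ∀ r ∈ s, g r ≤ h r) : (s.map g).prod ≤ (s.map h).prod := by
  induction s using Multiset.induction_on with
  | empty => simp
  | cons a s ih =>
    simp only [Multiset.map_cons, Multiset.prod_cons]
    have h1 := hg a (Multiset.mem_cons_self a s)
    have h2 := hgh a (Multiset.mem_cons_self a s)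
    have h3 := ih (fun r hr => hg r (Multiset.mem_cons_of_mem hr))
      (fun r hr => hgh r (Multiset.mem_cons_of_mem hr))
    have h4 : (0:ℝ) ≤ (s.map g).prod :=
      prod_map_nonneg s g fun r hr => hg r (Multiset.mem_cons_of_mem hr)
    nlinarith

lemma abs_eval_eq_prod (p : Polynomial ℂ) (z : ℂ) :
    Complex.abs (p.eval z)
      = Complex.abs p.leadingCoeff * ((p.roots.map fun r => Complex.abs (z - r)).prod) := by
  conv_lhs => rw [(IsAlgClosed.splits p).eq_prod_roots]
  rw [eval_mul, eval_C, map_mul]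
  congr 1
  rw [eval_multiset_prod, Multiset.map_map, abs_multiset_prod, Multiset.map_map]
  congr 1
  apply Multiset.map_congr rfl
  intro r _
  simp [Function.comp]

/-- Key comparison: a polynomial whose roots all lie in `im ≤ 0` satisfies
`|p(x)| ≥ (2/3)^natDegree |p(x₁)|` when `im x = 2δ > 0` and `x₁ = x + ρ`, `0 < ρ ≤ δ`. -/
lemma abs_eval_comparison (p : Polynomial ℂ) (hroots : ∀ r ∈ p.roots, r.im ≤ 0)
    (x : ℂ) (δ : ℝ) (hδ : 0 < δ) (hx : x.im = 2 * δ) (ρ : ℝ) (hρ : 0 < ρ) (hρδ : ρ ≤ δ)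
    (N : ℕ) (hN : p.natDegree ≤ N) :
    (2/3 : ℝ) ^ N * Complex.abs (p.eval (↑ρ + x)) ≤ Complex.abs (p.eval x) := by
  set x1 : ℂ := ↑ρ + x with hx1
  have key : ∀ r ∈ p.roots, (2/3 : ℝ) * Complex.abs (x1 - r) ≤ Complex.abs (x - r) := by
    intro r hr
    have him : r.im ≤ 0 := hroots r hr
    have h2δ : 2 * δ ≤ Complex.abs (x - r) := by
      have h1 : (x - r).im = 2*δ - r.im := by simp [Complex.sub_im, hx]
      have := Complex.abs_im_le_abs (x - r)
      rw [h1] at this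
      have habs : 2*δ - r.im ≤ |2*δ - r.im| := le_abs_self _
      linarith
    have htri : Complex.abs (x1 - r) ≤ ρ + Complex.abs (x - r) := by
      have : x1 - r = (↑ρ : ℂ) + (x - r) := by rw [hx1]; ring
      rw [this]
      refine le_trans (Complex.abs.add_le _ _) ?_
      simp [Complex.abs_ofReal, abs_of_pos hρ]
    have : Complex.abs (x1 - r) ≤ (3/2) * Complex.abs (x - r) := by linarith
    linarith
  rw [abs_eval_eq_prod p x, abs_eval_eq_prod p x1]
  have hle1 : ((p.roots.map fun r => (2/3 : ℝ) * Complex.abs (x1 - r)).prod)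
      ≤ ((p.roots.map fun r => Complex.abs (x - r)).prod) := by
    apply prod_map_le
    · intro r _; positivity
    · exact key
  have heq : ((p.roots.map fun r => (2/3 : ℝ) * Complex.abs (x1 - r)).prod)
      = (2/3 : ℝ) ^ (Multiset.card p.roots)
        * ((p.roots.map fun r => Complex.abs (x1 - r)).prod) := by
    rw [show (fun r => (2/3 : ℝ) * Complex.abs (x1 - r))
      = (fun r => ((fun _ => (2/3:ℝ)) r) * ((fun r => Complex.abs (x1 - r)) r)) from rfl]
    rw [Multiset.prod_map_mul]
    congr 1
    rw [Multiset.map_const']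
    rw [Multiset.prod_replicate]
  have hcard : Multiset.card p.roots ≤ N := le_trans (p.card_roots') hN
  have hpow : (2/3 : ℝ) ^ N ≤ (2/3 : ℝ) ^ (Multiset.card p.roots) := by
    apply pow_le_pow_of_le_one (by norm_num) (by norm_num) hcard
  have hprodnn : (0:ℝ) ≤ ((p.roots.map fun r => Complex.abs (x1 - r)).prod) :=
    prod_map_nonneg _ _ (fun r _ => Complex.abs.nonneg _)
  have hlc : (0:ℝ) ≤ Complex.abs p.leadingCoeff := Complex.abs.nonneg _
  have step : (2/3 : ℝ) ^ N * ((p.roots.map fun r => Complex.abs (x1 - r)).prod)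
      ≤ ((p.roots.map fun r => Complex.abs (x - r)).prod) := by
    calc (2/3 : ℝ) ^ N * ((p.roots.map fun r => Complex.abs (x1 - r)).prod)
        ≤ (2/3 : ℝ) ^ (Multiset.card p.roots)
            * ((p.roots.map fun r => Complex.abs (x1 - r)).prod) :=
          mul_le_mul_of_nonneg_right hpow hprodnn
      _ = ((p.roots.map fun r => (2/3 : ℝ) * Complex.abs (x1 - r)).prod) := heq.symm
      _ ≤ _ := hle1
  calc (2/3:ℝ)^N * (Complex.abs p.leadingCoeff * ((p.roots.map fun r => Complex.abs (x1 - r)).prod))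
      = Complex.abs p.leadingCoeff * ((2/3:ℝ)^N * ((p.roots.map fun r => Complex.abs (x1 - r)).prod)) := by ring
    _ ≤ Complex.abs p.leadingCoeff * ((p.roots.map fun r => Complex.abs (x - r)).prod) :=
        mul_le_mul_of_nonneg_left step hlc

/-- The top `y`-coefficient of an upper polynomial does not vanish on the open
upper half plane. -/
lemma top_nonvanishing (f : MvPolynomial (Fin 2) ℝ)
    (hf : ∀ σ : Fin 2 → ℂ, (∀ i, 0 < (σ i).im) →
      MvPolynomial.eval σ (MvPolynomial.map (algebraMap ℝ ℂ) f) ≠ 0)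
    (n : ℕ) (hn : Q f n ≠ 0) (htop : ∀ j, n < j → Q f j = 0)
    (x : ℂ) (hx : 0 < x.im) : (Qc f n).eval x ≠ 0 := by
  intro hx0
  obtain ⟨T1, hT1⟩ : ∃ T1, T1 = f.totalDegree + 1 := ⟨_, rfl⟩
  have hnT : n ≤ f.totalDegree := by
    by_contra h
    exact hn (Qzero f (by omega))
  have hQcn : Qc f n ≠ 0 := by
    rw [Qc]
    intro h
    apply hn
    have hinj := Polynomial.map_injective (algebraMap ℝ ℂ)
      (by intro a b hab; exact_mod_cast hab)
    exact hinj (by simpa using h)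
  -- the stable family χ t
  obtain ⟨χ, hχ⟩ : ∃ χ : ℝ → Polynomial ℂ, ∀ t : ℝ, χ t
      = ∑ j ∈ Finset.range (n+1), Polynomial.C ((I*t)^j * ((I*t)^n)⁻¹) * Qc f j :=
    ⟨_, fun _ => rfl⟩
  have hItne : ∀ t : ℝ, 0 < t → (I * (t:ℂ)) ≠ 0 := by
    intro t ht
    apply mul_ne_zero I_ne_zero
    exact_mod_cast ne_of_gt ht
  have habsIt : ∀ t : ℝ, 0 < t → Complex.abs (I * (t:ℂ)) = t := by
    intro t ht
    rw [map_mul, Complex.abs_I, Complex.abs_ofReal, one_mul, abs_of_pos ht]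
  -- evaluation of χ
  have hevχ : ∀ (t : ℝ) (z : ℂ), (χ t).eval z
      = ∑ j ∈ Finset.range (n+1), (I*t)^j * ((I*t)^n)⁻¹ * (Qc f j).eval z := by
    intro t z
    rw [hχ]
    simp [eval_finset_sum]
  -- χ t is nonvanishing on the upper half plane
  have hχne : ∀ (t : ℝ) (z : ℂ), 0 < t → 0 < z.im → (χ t).eval z ≠ 0 := by
    intro t z ht hz
    rw [hevχ t z]
    have hsum : ∑ j ∈ Finset.range (n+1), (I*t)^j * ((I*t)^n)⁻¹ * (Qc f j).eval z
        = ((I*t)^n)⁻¹ * ∑ j ∈ Finset.range (Kb f), (Qc f j).eval z * (I*t)^j := by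
      rw [Finset.mul_sum]
      rw [← Finset.sum_subset (Finset.range_subset_range.mpr (show n+1 ≤ Kb f by unfold Kb; omega))]
      · apply Finset.sum_congr rfl; intro j _; ring
      · intro j _ hj
        have hj' : n < j := by
          have hj2 : ¬ (j < n + 1) := fun h => hj (Finset.mem_range.mpr h)
          omega
        simp [Qc, htop j hj']
    rw [hsum]
    apply mul_ne_zero (inv_ne_zero (pow_ne_zero _ (hItne t ht)))
    rw [← evalF]
    apply hf
    intro i
    fin_cases i
    · simpa using hz
    · simp
      exact ht
  -- roots of χ t are in the closed lower half plane
  have hroots : ∀ (t : ℝ), 0 < t → ∀ r ∈ (χ t).roots, r.im ≤ 0 := by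
    intro t ht r hr
    by_contra h
    exact hχne t r ht (lt_of_not_ge h) (IsRoot.eq_zero (Polynomial.isRoot_of_mem_roots hr))
  -- degree bound
  have hdegχ : ∀ t : ℝ, (χ t).natDegree ≤ T1 := by
    intro t
    rw [hχ, hT1]
    apply natDegree_sum_le_of_forall_le
    intro j _
    exact le_trans (natDegree_C_mul_le _ _) (natDegree_Qc_le f j)
  -- choose x1 = ρ + x with Qc n nonvanishing there
  obtain ⟨δ, hδdef⟩ : ∃ δ : ℝ, δ = x.im / 2 := ⟨_, rfl⟩
  have hδ : 0 < δ := by rw [hδdef]; linarith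
  obtain ⟨ρ, hρIoc, hρroot⟩ : ∃ ρ : ℝ, ρ ∈ Set.Ioc 0 δ ∧ ¬ ((Qc f n).comp (X + C x)).IsRoot ρ := by
    by_contra hcon
    push_neg at hcon
    have hPne : (Qc f n).comp (X + C x) ≠ 0 := by
      intro h
      apply hQcn
      have hcmp : ((Qc f n).comp (X + C x)).comp (X - C x) = Qc f n := by
        rw [comp_assoc]
        simp
      rw [← hcmp, h]
      simp
    have hfin := Polynomial.finite_setOf_isRoot hPne
    have hsub2 : (fun ρ : ℝ => (ρ : ℂ)) '' (Set.Ioc 0 δ)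
        ⊆ {z | ((Qc f n).comp (X + C x)).IsRoot z} := by
      rintro - ⟨ρ, hρ, rfl⟩
      exact hcon ρ hρ
    have hinf : ((fun ρ : ℝ => (ρ : ℂ)) '' (Set.Ioc 0 δ)).Infinite := by
      apply Set.Infinite.image
      · intro a _ b _ hab
        exact Complex.ofReal_inj.mp hab
      · exact Set.Ioc_infinite hδ
    exact (hfin.subset hsub2).not_infinite hinf
  obtain ⟨hρ0, hρδ⟩ := hρIoc
  obtain ⟨x1, hx1def⟩ : ∃ x1 : ℂ, x1 = ↑ρ + x := ⟨_, rfl⟩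
  have hx1v : (Qc f n).eval x1 ≠ 0 := by
    intro h
    apply hρroot
    rw [IsRoot, eval_comp]
    rw [hx1def] at h
    simpa using h
  obtain ⟨c, hcdef⟩ : ∃ c : ℝ, c = Complex.abs ((Qc f n).eval x1) := ⟨_, rfl⟩
  have hc : 0 < c := by
    rw [hcdef]
    exact AbsoluteValue.pos Complex.abs hx1v
  -- tail bounds
  obtain ⟨Cx, hCx⟩ : ∃ Cx : ℝ, Cx = ∑ j ∈ Finset.range n, Complex.abs ((Qc f j).eval x) :=
    ⟨_, rfl⟩
  obtain ⟨Cx1, hCx1⟩ : ∃ Cx1 : ℝ, Cx1 = ∑ j ∈ Finset.range n, Complex.abs ((Qc f j).eval x1) :=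
    ⟨_, rfl⟩
  have hCxnn : 0 ≤ Cx := by
    rw [hCx]; exact Finset.sum_nonneg fun j _ => Complex.abs.nonneg _
  have hCx1nn : 0 ≤ Cx1 := by
    rw [hCx1]; exact Finset.sum_nonneg fun j _ => Complex.abs.nonneg _
  have tail : ∀ (t : ℝ), 1 ≤ t → ∀ z : ℂ,
      Complex.abs (∑ j ∈ Finset.range n, (I*t)^j * ((I*t)^n)⁻¹ * (Qc f j).eval z)
        ≤ (∑ j ∈ Finset.range n, Complex.abs ((Qc f j).eval z)) / t := by
    intro t ht z
    have ht0 : 0 < t := lt_of_lt_of_le one_pos ht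
    refine le_trans (Complex.abs.sum_le _ _) ?_
    rw [Finset.sum_div]
    apply Finset.sum_le_sum
    intro j hj
    rw [map_mul, map_mul, map_inv₀, map_pow, map_pow, habsIt t ht0]
    have hjn : j + 1 ≤ n := Finset.mem_range.mp hj
    have h1 : t^j * t ≤ t^n := by
      rw [← pow_succ]
      exact pow_le_pow_right₀ ht hjn
    have h2 : t^j * (t^n)⁻¹ ≤ 1/t := by
      rw [show t^j * (t^n)⁻¹ = t^j / t^n from (div_eq_mul_inv _ _).symm,
        div_le_div_iff₀ (by positivity) ht0]
      calc t^j * t ≤ t^n := h1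
        _ = 1 * t^n := (one_mul _).symm
    calc t^j * (t^n)⁻¹ * Complex.abs ((Qc f j).eval z)
        ≤ (1/t) * Complex.abs ((Qc f j).eval z) :=
          mul_le_mul_of_nonneg_right h2 (Complex.abs.nonneg _)
      _ = Complex.abs ((Qc f j).eval z) / t := by ring
  -- evaluations at x and x1
  have hevx : ∀ t : ℝ, (χ t).eval x
      = ∑ j ∈ Finset.range n, (I*t)^j * ((I*t)^n)⁻¹ * (Qc f j).eval x := by
    intro t
    rw [hevχ t x, Finset.sum_range_succ, hx0]
    simp
  have hevx1 : ∀ t : ℝ, 0 < t → (χ t).eval x1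
      = (∑ j ∈ Finset.range n, (I*t)^j * ((I*t)^n)⁻¹ * (Qc f j).eval x1)
          + (Qc f n).eval x1 := by
    intro t ht
    rw [hevχ t x1, Finset.sum_range_succ]
    rw [mul_inv_cancel₀ (pow_ne_zero n (hItne t ht)), one_mul]
  -- choose a large t
  obtain ⟨ε0, hε0⟩ : ∃ ε0 : ℝ, ε0 = (2/3:ℝ)^T1 * (c/2) := ⟨_, rfl⟩
  have hε0pos : 0 < ε0 := by
    rw [hε0]
    apply mul_pos (by positivity)
    linarith
  obtain ⟨t, ht1, hta, htb⟩ : ∃ t : ℝ, 1 ≤ t ∧ 2*Cx1/c ≤ t ∧ Cx/ε0 < t := by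
    refine ⟨1 + max (2*Cx1/c) (Cx/ε0), ?_, ?_, ?_⟩
    · have h0 : 0 ≤ 2*Cx1/c := div_nonneg (by linarith) (le_of_lt hc)
      have h1 := le_max_left (2*Cx1/c) (Cx/ε0)
      linarith
    · have h1 := le_max_left (2*Cx1/c) (Cx/ε0)
      linarith
    · have h1 := le_max_right (2*Cx1/c) (Cx/ε0)
      linarith
  have ht0 : 0 < t := lt_of_lt_of_le one_pos ht1
  -- lower bound |χt(x1)| ≥ c/2
  have hb1 : c/2 ≤ Complex.abs ((χ t).eval x1) := by
    rw [hevx1 t ht0]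
    have htail := tail t ht1 x1
    have h2 : Cx1 / t ≤ c/2 := by
      rw [div_le_iff₀ ht0]
      rw [div_le_iff₀ hc] at hta
      linarith
    have htri : c ≤ Complex.abs ((∑ j ∈ Finset.range n, (I*t)^j * ((I*t)^n)⁻¹ * (Qc f j).eval x1)
          + (Qc f n).eval x1)
        + Complex.abs (∑ j ∈ Finset.range n, (I*t)^j * ((I*t)^n)⁻¹ * (Qc f j).eval x1) := by
      have hdecomp : (Qc f n).eval x1
          = ((∑ j ∈ Finset.range n, (I*t)^j * ((I*t)^n)⁻¹ * (Qc f j).eval x1)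
              + (Qc f n).eval x1)
            + (-(∑ j ∈ Finset.range n, (I*t)^j * ((I*t)^n)⁻¹ * (Qc f j).eval x1)) := by ring
      calc c = Complex.abs ((Qc f n).eval x1) := hcdef
        _ = Complex.abs (((∑ j ∈ Finset.range n, (I*t)^j * ((I*t)^n)⁻¹ * (Qc f j).eval x1)
              + (Qc f n).eval x1)
            + (-(∑ j ∈ Finset.range n, (I*t)^j * ((I*t)^n)⁻¹ * (Qc f j).eval x1))) := by
            rw [← hdecomp]
        _ ≤ _ := by
            refine le_trans (Complex.abs.add_le _ _) ?_
            rw [AbsoluteValue.map_neg]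
    have hSle : Complex.abs (∑ j ∈ Finset.range n, (I*t)^j * ((I*t)^n)⁻¹ * (Qc f j).eval x1)
        ≤ Cx1 / t := by
      rw [hCx1]
      exact htail
    linarith
  -- upper bound |χt(x)| < ε0
  have hb2 : Complex.abs ((χ t).eval x) < ε0 := by
    rw [hevx t]
    have h3 : Cx / t < ε0 := by
      have htb2 := (div_lt_iff₀ hε0pos).mp htb
      rw [div_lt_iff₀ ht0]
      linarith
    rw [hCx] at h3
    exact lt_of_le_of_lt (tail t ht1 x) h3
  -- comparison
  have hcomp := abs_eval_comparison (χ t) (hroots t ht0) x δ hδ (by rw [hδdef]; ring)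
    ρ hρ0 hρδ T1 (hdegχ t)
  rw [← hx1def] at hcomp
  have final : ε0 ≤ Complex.abs ((χ t).eval x) := by
    calc ε0 = (2/3:ℝ)^T1 * (c/2) := hε0
      _ ≤ (2/3:ℝ)^T1 * Complex.abs ((χ t).eval x1) :=
          mul_le_mul_of_nonneg_left hb1 (by positivity)
      _ ≤ _ := hcomp
  linarith

lemma coeff_sum_CX {R : Type*} [Semiring R] (c : ℕ → R) (K m : ℕ) (hm : m < K) :
    (∑ k ∈ Finset.range K, Polynomial.C (c k) * Polynomial.X^k).coeff m = c m := by
  rw [finset_sum_coeff]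
  rw [Finset.sum_eq_single m]
  · simp
  · intro b _ hb
    simp [coeff_C_mul, coeff_X_pow, Ne.symm hb]
  · intro h; exact absurd (Finset.mem_range.mpr hm) h

lemma natDegree_sum_CX {R : Type*} [Semiring R] (c : ℕ → R) (K : ℕ) :
    (∑ k ∈ Finset.range (K+1), Polynomial.C (c k) * Polynomial.X^k).natDegree ≤ K := by
  apply natDegree_sum_le_of_forall_le
  intro k hk
  refine le_trans (natDegree_C_mul_le _ _) (le_trans (natDegree_X_pow_le _) ?_)
  exact Nat.lt_succ_iff.mp (Finset.mem_range.mp hk)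

/-- If a real polynomial vanishes at `0` and is nonnegative on `(0, ∞)`, its linear
coefficient is nonnegative. -/
lemma coeff_one_nonneg (Φ : Polynomial ℝ) (h0 : Φ.coeff 0 = 0)
    (hpos : ∀ ε : ℝ, 0 < ε → 0 ≤ Φ.eval ε) : 0 ≤ Φ.coeff 1 := by
  have hfac : Φ.divX * X = Φ := by
    have := Φ.divX_mul_X_add
    rw [h0] at this
    simpa using this
  have hΨpos : ∀ ε : ℝ, 0 < ε → 0 ≤ Φ.divX.eval ε := by
    intro ε hε
    have h1 := hpos ε hε
    rw [← hfac] at h1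
    simp only [eval_mul, eval_X] at h1
    exact (mul_nonneg_iff_of_pos_right hε).mp h1
  have hcont : Continuous fun x : ℝ => Φ.divX.eval x := Φ.divX.continuous
  have htends : Filter.Tendsto (fun m : ℕ => Φ.divX.eval (1/((m:ℝ)+1))) Filter.atTop
      (nhds (Φ.divX.eval 0)) :=
    (hcont.tendsto 0).comp tendsto_one_div_add_atTop_nhds_zero_nat
  have h2 : 0 ≤ Φ.divX.eval 0 :=
    ge_of_tendsto' htends fun m => hΨpos _ (by positivity)
  rwa [← coeff_zero_eq_eval_zero, coeff_divX] at h2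

lemma eval_zero_map_iterate (p : Polynomial ℝ) (u : ℕ) :
    ((derivative^[u] (p.map (algebraMap ℝ ℂ))).eval 0)
      = (((derivative^[u] p).eval 0 : ℝ) : ℂ) := by
  rw [Polynomial.iterate_derivative_map, Polynomial.eval_map, Polynomial.eval₂_at_zero,
    coeff_zero_eq_eval_zero]
  rfl

lemma eval_zero_iterate_deriv (p : Polynomial ℝ) (u : ℕ) :
    (derivative^[u] p).eval 0 = (u.factorial : ℝ) * p.coeff u := by
  rw [← coeff_zero_eq_eval_zero, Polynomial.coeff_iterate_derivative]
  rw [Nat.zero_add, Nat.descFactorial_self, nsmul_eq_mul]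

/-- The main inequality in terms of the double coefficients `av`. -/
theorem main_ineq (f : MvPolynomial (Fin 2) ℝ)
    (hf : ∀ σ : Fin 2 → ℂ, (∀ i, 0 < (σ i).im) →
      MvPolynomial.eval σ (MvPolynomial.map (algebraMap ℝ ℂ) f) ≠ 0)
    (r s : ℕ) :
    av f r s * av f (r+1) (s+1) ≤ av f (r+1) s * av f r (s+1) := by
  by_cases hQ : ∀ j, s ≤ j → Q f j = 0
  · have h1 : av f r s = 0 := by
      rw [← coeffQ, hQ s le_rfl, coeff_zero]
    have h2 : av f r (s+1) = 0 := by
      rw [← coeffQ, hQ (s+1) (Nat.le_succ_of_le le_rfl), coeff_zero]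
    rw [h1, h2]
    simp
  · push_neg at hQ
    obtain ⟨j0, hj0s, hj0⟩ := hQ
    -- the top nonzero index n
    have hj0T : j0 ≤ f.totalDegree := by
      by_contra h
      exact hj0 (Qzero f (by omega))
    have hSne : ((Finset.range (Kb f)).filter (fun j => Q f j ≠ 0)).Nonempty :=
      ⟨j0, Finset.mem_filter.mpr ⟨Finset.mem_range.mpr (by unfold Kb; omega), hj0⟩⟩
    obtain ⟨n, hndef⟩ :
        ∃ n, n = ((Finset.range (Kb f)).filter (fun j => Q f j ≠ 0)).max' hSne := ⟨_, rfl⟩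
    have hn : Q f n ≠ 0 := by
      have hmem := Finset.max'_mem _ hSne
      rw [← hndef] at hmem
      exact (Finset.mem_filter.mp hmem).2
    have htopn : ∀ j, n < j → Q f j = 0 := by
      intro j hj
      by_contra h
      have hjT : j ≤ f.totalDegree := by
        by_contra h2
        exact h (Qzero f (by omega))
      have hmem : j ∈ (Finset.range (Kb f)).filter (fun j => Q f j ≠ 0) :=
        Finset.mem_filter.mpr ⟨Finset.mem_range.mpr (by unfold Kb; omega), h⟩
      have hle := Finset.le_max' _ j hmem
      rw [← hndef] at hle
      omega
    have hsn : s ≤ n := by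
      have hmem : j0 ∈ (Finset.range (Kb f)).filter (fun j => Q f j ≠ 0) :=
        Finset.mem_filter.mpr ⟨Finset.mem_range.mpr (by unfold Kb; omega), hj0⟩
      have hle := Finset.le_max' _ j0 hmem
      rw [← hndef] at hle
      omega
    have hB := top_nonvanishing f hf n hn htopn
    -- auxiliary data
    obtain ⟨g, hg⟩ : ∃ g : ℕ → ℕ → ℝ, ∀ k u, g k u = (derivative^[u] (Q f (k+s))).eval 0 :=
      ⟨_, fun _ _ => rfl⟩
    obtain ⟨df, hdf⟩ : ∃ df : ℕ → ℕ, ∀ k, df k = (k+s).descFactorial s := ⟨_, fun _ => rfl⟩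
    obtain ⟨Aa, hAa⟩ : ∃ Aa : ℕ → Polynomial ℝ, ∀ u, Aa u
        = ∑ k ∈ Finset.range (Kb f),
            Polynomial.C ((df k : ℝ) * (Complex.I^k).re * g k u) * Polynomial.X^k :=
      ⟨_, fun _ => rfl⟩
    obtain ⟨Bb, hBb⟩ : ∃ Bb : ℕ → Polynomial ℝ, ∀ u, Bb u
        = ∑ k ∈ Finset.range (Kb f),
            Polynomial.C ((df k : ℝ) * (Complex.I^k).im * g k u) * Polynomial.X^k :=
      ⟨_, fun _ => rfl⟩
    obtain ⟨hp, hhp⟩ : ∃ hp : ℝ → Polynomial ℂ, ∀ ε : ℝ, hp ε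
        = ∑ k ∈ Finset.range (Kb f),
            Polynomial.C ((I*(ε:ℂ))^k * (df k : ℂ)) * Qc f (k+s) := ⟨_, fun _ => rfl⟩
    -- nonvanishing of hp ε on the upper half plane
    have hpup : ∀ ε : ℝ, 0 < ε → ∀ z : ℂ, 0 < z.im → (hp ε).eval z ≠ 0 := by
      intro ε hε z hz
      obtain ⟨Gz, hGz⟩ : ∃ Gz : Polynomial ℂ, Gz = ∑ j ∈ Finset.range (Kb f),
          Polynomial.C ((Qc f j).eval z) * Polynomial.X^j := ⟨_, rfl⟩
      have hGcoeff : ∀ m, Gz.coeff m = (Qc f m).eval z := by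
        intro m
        by_cases hm : m < Kb f
        · rw [hGz]; exact coeff_sum_CX _ _ _ hm
        · have hQm : Q f m = 0 := Qzero f (by unfold Kb at hm; omega)
          rw [hGz]
          have h1 : (∑ j ∈ Finset.range (Kb f),
              Polynomial.C ((Qc f j).eval z) * Polynomial.X^j).coeff m = 0 := by
            rw [finset_sum_coeff]
            apply Finset.sum_eq_zero
            intro k hk
            have hkm : m ≠ k := by
              have := Finset.mem_range.mp hk; omega
            simp [coeff_C_mul, coeff_X_pow, hkm]
          rw [h1]
          simp [Qc, hQm]
      have hGup : ∀ w : ℂ, 0 < w.im → Gz.eval w ≠ 0 := by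
        intro w hw
        rw [hGz]
        have heq : (∑ j ∈ Finset.range (Kb f),
            Polynomial.C ((Qc f j).eval z) * Polynomial.X^j).eval w
            = ∑ j ∈ Finset.range (Kb f), (Qc f j).eval z * w^j := by
          simp [eval_finset_sum]
        rw [heq, ← evalF]
        apply hf
        intro i
        fin_cases i
        · simpa using hz
        · simpa using hw
      have hGood : GoodP (derivative^[s] Gz) := goodP_iterate (Or.inr hGup) s
      have hcoeffu : ∀ k, (derivative^[s] Gz).coeff k = (df k : ℂ) * (Qc f (k+s)).eval z := by
        intro k
        rw [Polynomial.coeff_iterate_derivative, hGcoeff, hdf, nsmul_eq_mul]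
      have hune : derivative^[s] Gz ≠ 0 := by
        intro h
        have hc := hcoeffu (n - s)
        rw [h] at hc
        simp only [coeff_zero] at hc
        have hns : n - s + s = n := Nat.sub_add_cancel hsn
        rw [hns] at hc
        have hdfne : (df (n-s) : ℂ) ≠ 0 := by
          have hne : df (n-s) ≠ 0 := by
            rw [hdf, hns]
            intro h
            have := Nat.descFactorial_eq_zero_iff_lt.mp h
            omega
          exact_mod_cast hne
        have hev0 : (Qc f n).eval z = 0 := by
          rcases mul_eq_zero.mp hc.symm with h' | h'
          · exact absurd h' hdfne
          · exact h'
        exact hB z hz hev0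
      have hunv : ∀ w : ℂ, 0 < w.im → (derivative^[s] Gz).eval w ≠ 0 := by
        rcases hGood with h | h
        · exact absurd h hune
        · exact h
      -- identify the evaluation of hp ε with that of the derivative
      have hdeg : (derivative^[s] Gz).natDegree < Kb f := by
        have h1 : Gz.natDegree ≤ f.totalDegree + 1 := by
          rw [hGz]
          exact natDegree_sum_CX (fun j => (Qc f j).eval z) (f.totalDegree + 1)
        have h2 := Polynomial.natDegree_iterate_derivative Gz s
        unfold Kb
        omega
      have heval : (hp ε).eval z = (derivative^[s] Gz).eval (I*(ε:ℂ)) := by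
        rw [Polynomial.eval_eq_sum_range' hdeg (I*(ε:ℂ))]
        rw [hhp, eval_finset_sum]
        apply Finset.sum_congr rfl
        intro k _
        rw [hcoeffu k]
        simp only [eval_mul, eval_C]
        ring
      rw [heval]
      have him : (I*(ε:ℂ)).im = ε := by simp
      exact hunv _ (by rw [him]; exact hε)
    -- the comparison polynomial Φ
    obtain ⟨Φ, hΦ⟩ : ∃ Φ : Polynomial ℝ, Φ = Aa (r+1) * Bb r - Bb (r+1) * Aa r := ⟨_, rfl⟩
    have hYval : ∀ (u : ℕ) (ε : ℝ), (derivative^[u] (hp ε)).eval 0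
        = (((Aa u).eval ε : ℝ) : ℂ) + I * (((Bb u).eval ε : ℝ) : ℂ) := by
      intro u ε
      rw [hhp, Polynomial.iterate_derivative_sum, eval_finset_sum]
      have hterm : ∀ k ∈ Finset.range (Kb f),
          (derivative^[u] (Polynomial.C ((I*(ε:ℂ))^k * (df k : ℂ)) * Qc f (k+s))).eval 0
            = (df k : ℂ) * ((g k u : ℝ) : ℂ) * I^k * (ε:ℂ)^k := by
        intro k _
        rw [Polynomial.iterate_derivative_C_mul, eval_mul, eval_C]
        rw [show Qc f (k+s) = (Q f (k+s)).map (algebraMap ℝ ℂ) from rfl]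
        rw [eval_zero_map_iterate, ← hg, mul_pow]
        ring
      rw [Finset.sum_congr rfl hterm]
      rw [hAa, hBb, eval_finset_sum, eval_finset_sum]
      push_cast
      rw [Finset.mul_sum, ← Finset.sum_add_distrib]
      apply Finset.sum_congr rfl
      intro k _
      have hik : (((Complex.I^k).re : ℝ) : ℂ) + Complex.I * (((Complex.I^k).im : ℝ) : ℂ)
          = Complex.I^k := by
        rw [mul_comm]
        exact Complex.re_add_im (I^k)
      simp only [eval_mul, eval_C, eval_pow, eval_X]
      push_cast
      linear_combination (-((df k : ℂ) * ((g k u : ℝ) : ℂ) * ((ε : ℝ) : ℂ)^k)) * hik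
    -- HB inequality: Φ is nonnegative on (0, ∞)
    have hΦpos : ∀ ε : ℝ, 0 < ε → 0 ≤ Φ.eval ε := by
      intro ε hε
      have hgood : GoodP (derivative^[r] (hp ε)) := goodP_iterate (Or.inr (hpup ε hε)) r
      have hhb := aux_hb hgood
      have hiter : (derivative^[r] (hp ε)).derivative = derivative^[r+1] (hp ε) :=
        (Function.iterate_succ_apply' derivative r (hp ε)).symm
      rw [hiter, hYval r ε, hYval (r+1) ε] at hhb
      have hcomp : ∀ a1 b1 a0 b0 : ℝ, ((((a1:ℝ):ℂ) + I*((b1:ℝ):ℂ))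
            * (starRingEnd ℂ) (((a0:ℝ):ℂ) + I*((b0:ℝ):ℂ))).im
          = b1*a0 - a1*b0 := by
        intro a1 b1 a0 b0
        simp [map_add, map_mul, Complex.conj_I, Complex.conj_ofReal, Complex.mul_im,
          Complex.add_im, Complex.add_re, Complex.mul_re]
        ring
      rw [hcomp] at hhb
      rw [hΦ]
      simp only [eval_sub, eval_mul]
      linarith
    -- coefficients of Φ
    have hKb1 : 1 < Kb f := by unfold Kb; omega
    have hKb0 : 0 < Kb f := by omega
    have hA0 : ∀ u, (Aa u).coeff 0 = (df 0 : ℝ) * g 0 u := by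
      intro u
      rw [hAa, coeff_sum_CX _ _ _ hKb0]
      norm_num
    have hA1 : ∀ u, (Aa u).coeff 1 = 0 := by
      intro u
      rw [hAa, coeff_sum_CX _ _ _ hKb1]
      simp
    have hB0 : ∀ u, (Bb u).coeff 0 = 0 := by
      intro u
      rw [hBb, coeff_sum_CX _ _ _ hKb0]
      simp
    have hB1 : ∀ u, (Bb u).coeff 1 = (df 1 : ℝ) * g 1 u := by
      intro u
      rw [hBb, coeff_sum_CX _ _ _ hKb1]
      simp
    have hmul1 : ∀ (p q : Polynomial ℝ), (p*q).coeff 1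
        = p.coeff 0 * q.coeff 1 + p.coeff 1 * q.coeff 0 := by
      intro p q
      rw [coeff_mul, Finset.Nat.sum_antidiagonal_eq_sum_range_succ_mk]
      simp [Finset.sum_range_succ]
    have hΦ0 : Φ.coeff 0 = 0 := by
      rw [hΦ, coeff_sub, mul_coeff_zero, mul_coeff_zero, hB0, hB0]
      ring
    have hΦ1 : Φ.coeff 1 = (df 0 : ℝ) * g 0 (r+1) * ((df 1 : ℝ) * g 1 r)
        - (df 1 : ℝ) * g 1 (r+1) * ((df 0 : ℝ) * g 0 r) := by
      rw [hΦ, coeff_sub, hmul1, hmul1, hA0, hA1, hB0, hB1, hA0, hA1, hB0, hB1]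
      ring
    have hkey := coeff_one_nonneg Φ hΦ0 hΦpos
    rw [hΦ1] at hkey
    -- translate g into coefficients av
    have hgval : ∀ k u, g k u = (u.factorial : ℝ) * av f u (k+s) := by
      intro k u
      rw [hg, eval_zero_iterate_deriv, coeffQ]
    have hg00 : g 0 r = (r.factorial : ℝ) * av f r s := by
      rw [hgval]; norm_num
    have hg01 : g 0 (r+1) = ((r+1).factorial : ℝ) * av f (r+1) s := by
      rw [hgval]; norm_num
    have hg10 : g 1 r = (r.factorial : ℝ) * av f r (s+1) := by
      rw [hgval, Nat.add_comm 1 s]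
    have hg11 : g 1 (r+1) = ((r+1).factorial : ℝ) * av f (r+1) (s+1) := by
      rw [hgval, Nat.add_comm 1 s]
    rw [hg00, hg01, hg10, hg11] at hkey
    -- positivity of the constants
    have hdf0 : 0 < df 0 := by
      rw [hdf]
      rcases Nat.eq_zero_or_pos ((0+s).descFactorial s) with h | h
      · exfalso
        have := Nat.descFactorial_eq_zero_iff_lt.mp h
        omega
      · exact h
    have hdf1 : 0 < df 1 := by
      rw [hdf]
      rcases Nat.eq_zero_or_pos ((1+s).descFactorial s) with h | h
      · exfalso
        have := Nat.descFactorial_eq_zero_iff_lt.mp h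
        omega
      · exact h
    have hdf0' : (0:ℝ) < (df 0 : ℝ) := by exact_mod_cast hdf0
    have hdf1' : (0:ℝ) < (df 1 : ℝ) := by exact_mod_cast hdf1
    have hfr : (0:ℝ) < (r.factorial : ℝ) := by exact_mod_cast r.factorial_pos
    have hfr1 : (0:ℝ) < ((r+1).factorial : ℝ) := by exact_mod_cast (r+1).factorial_pos
    nlinarith [hkey, mul_pos (mul_pos (mul_pos hdf0' hdf1') hfr) hfr1]

end CQI
end

/-- Coefficient inequalities for real upper polynomials in two variables:
if `f = Σ a_{i,j} xⁱyʲ ∈ RU₂` then `a_{r,s}·a_{r+1,s+1} ≤ a_{r+1,s}·a_{r,s+1}`. -/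
theorem coeff_quadratic_inequality (f : MvPolynomial (Fin 2) ℝ)
    (hf : IsUpper (MvPolynomial.map (algebraMap ℝ ℂ) f)) (r s : ℕ) :
    f.coeff (Finsupp.single 0 r + Finsupp.single 1 s) *
        f.coeff (Finsupp.single 0 (r + 1) + Finsupp.single 1 (s + 1)) ≤
      f.coeff (Finsupp.single 0 (r + 1) + Finsupp.single 1 s) *
        f.coeff (Finsupp.single 0 r + Finsupp.single 1 (s + 1)) :=
  CQI.main_ineq f hf r s
end

section
/- Let f(x, y) ∈ ℝ[x, y] be a real upper polynomial in two variables (f ∈ RU₂) such that every monomial xⁱyʲ appearing in f with nonzero coefficient has both i and j even. Then f factors as a product of univariate polynomials: there exist univariate real polynomials g(x) and h(y), each with all real roots (i.e. g, h ∈ RU₁), such that f(x, y) = g(x)·h(y). -/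
namespace EvenFactor
open MvPolynomial Polynomial Complex Finset

noncomputable def E (f : MvPolynomial (Fin 2) ℝ) (a b : ℂ) : ℂ :=
  MvPolynomial.eval ![a, b] (MvPolynomial.map (algebraMap ℝ ℂ) f)

noncomputable def ck (f : MvPolynomial (Fin 2) ℝ) (k : ℕ) : Polynomial ℂ :=
  ∑ m ∈ f.support.filter (fun m => m 0 = k),
    Polynomial.C ((f.coeff m : ℝ) : ℂ) * Polynomial.X ^ (m 1)

lemma E_eq (f : MvPolynomial (Fin 2) ℝ) (a b : ℂ) :
    E f a b = ∑ m ∈ f.support, ((f.coeff m : ℝ) : ℂ) * (a ^ m 0 * b ^ m 1) := by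
  rw [E, MvPolynomial.eval_map, MvPolynomial.eval₂_eq']
  refine Finset.sum_congr rfl fun m _ => ?_
  rw [Fin.prod_univ_two]
  simp [Complex.coe_algebraMap]

lemma ck_eval (f : MvPolynomial (Fin 2) ℝ) (k : ℕ) (τ : ℂ) :
    (ck f k).eval τ = ∑ m ∈ f.support.filter (fun m => m 0 = k),
      ((f.coeff m : ℝ) : ℂ) * τ ^ (m 1) := by
  rw [ck]
  simp [Polynomial.eval_finset_sum]

lemma conj_E (f : MvPolynomial (Fin 2) ℝ) (a b : ℂ) :
    (starRingEnd ℂ) (E f a b) = E f ((starRingEnd ℂ) a) ((starRingEnd ℂ) b) := by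
  rw [E_eq, E_eq, map_sum]
  refine Finset.sum_congr rfl fun m _ => ?_
  simp [map_mul, map_pow, Complex.conj_ofReal]

lemma conj_ck_eval (f : MvPolynomial (Fin 2) ℝ) (k : ℕ) (τ : ℂ) :
    (starRingEnd ℂ) ((ck f k).eval τ) = (ck f k).eval ((starRingEnd ℂ) τ) := by
  rw [ck_eval, ck_eval, map_sum]
  refine Finset.sum_congr rfl fun m _ => ?_
  simp [map_mul, map_pow, Complex.conj_ofReal]

lemma E_grouped (f : MvPolynomial (Fin 2) ℝ) (N : ℕ) (hN : ∀ m ∈ f.support, m 0 < N)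
    (a b : ℂ) : E f a b = ∑ k ∈ Finset.range N, (ck f k).eval b * a ^ k := by
  rw [E_eq]
  rw [← Finset.sum_fiberwise_of_maps_to (g := fun m => m 0) (t := Finset.range N)
    (fun m hm => Finset.mem_range.2 (hN m hm))]
  refine Finset.sum_congr rfl fun k _ => ?_
  rw [ck_eval, Finset.sum_mul]
  refine Finset.sum_congr rfl fun m hm => ?_
  obtain ⟨hm1, hm2⟩ := Finset.mem_filter.1 hm
  rw [hm2]; ring

variable {f : MvPolynomial (Fin 2) ℝ}

lemma E_neg (heven : ∀ m ∈ f.support, Even (m 0) ∧ Even (m 1)) (a b : ℂ) :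
    E f (-a) (-b) = E f a b ∧ E f (-a) b = E f a b ∧ E f a (-b) = E f a b := by
  refine ⟨?_, ?_, ?_⟩ <;>
  · rw [E_eq, E_eq]
    refine Finset.sum_congr rfl fun m hm => ?_
    simp only [(heven m hm).1.neg_pow, (heven m hm).2.neg_pow]

lemma E_upper (hf : IsUpper (MvPolynomial.map (algebraMap ℝ ℂ) f)) {a b : ℂ}
    (ha : 0 < a.im) (hb : 0 < b.im) : E f a b ≠ 0 := by
  have := hf ![a, b] ?_
  · exact this
  · intro i
    fin_cases i <;> simpa

lemma step1 (hf : IsUpper (MvPolynomial.map (algebraMap ℝ ℂ) f))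
    (heven : ∀ m ∈ f.support, Even (m 0) ∧ Even (m 1)) {a b : ℂ}
    (ha : a.im ≠ 0) (hb : b.im ≠ 0) : E f a b ≠ 0 := by
  rcases ha.lt_or_gt with ha' | ha' <;> rcases hb.lt_or_gt with hb' | hb'
  · rw [← (E_neg heven a b).1]
    exact E_upper hf (by simpa) (by simpa)
  · rw [← (E_neg heven a b).2.1]
    exact E_upper hf (by simpa) hb'
  · rw [← (E_neg heven a b).2.2]
    exact E_upper hf ha' (by simpa)
  · exact E_upper hf ha' hb'

lemma ck_zero {k : ℕ} (hk : ∀ m ∈ f.support, m 0 ≠ k) : ck f k = 0 := by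
  rw [ck, Finset.sum_eq_zero]
  intro m hm
  exact absurd (Finset.mem_filter.1 hm).2 (hk m (Finset.mem_filter.1 hm).1)

lemma ck_ne_zero {m : Fin 2 →₀ ℕ} (hm : m ∈ f.support) : ck f (m 0) ≠ 0 := by
  have hcoeff : (ck f (m 0)).coeff (m 1) = ((f.coeff m : ℝ) : ℂ) := by
    rw [ck, Polynomial.finset_sum_coeff]
    rw [Finset.sum_eq_single_of_mem m
      (show m ∈ f.support.filter (fun m' => m' 0 = m 0) from Finset.mem_filter.2 ⟨hm, rfl⟩)]
    · simp
    · intro m' hm' hne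
      obtain ⟨hs, h0⟩ := Finset.mem_filter.1 hm'
      have h1 : m' 1 ≠ m 1 := by
        intro h1
        apply hne
        ext i
        refine Fin.cases ?_ ?_ i
        · exact h0
        · intro j
          have : j = 0 := Subsingleton.elim j 0
          subst this
          exact h1
      rw [Polynomial.coeff_C_mul, Polynomial.coeff_X_pow, if_neg (fun h => h1 h.symm), mul_zero]
  intro h
  rw [h] at hcoeff
  simp only [Polynomial.coeff_zero] at hcoeff
  exact (MvPolynomial.mem_support_iff.1 hm) (by exact_mod_cast hcoeff.symm)

lemma coeff_eq_lead_mul_real {p : Polynomial ℂ} (hp : p ≠ 0)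
    (hroots : ∀ z, p.eval z = 0 → z.im = 0) (k : ℕ) :
    ∃ r : ℝ, p.coeff k = p.leadingCoeff * r := by
  have hsplit : p.Splits := IsAlgClosed.splits p
  have hprod := hsplit.eq_prod_roots
  set q : Polynomial ℝ := (p.roots.map (fun z => Polynomial.X - Polynomial.C z.re)).prod with hq
  have hmap : q.map (algebraMap ℝ ℂ) = (p.roots.map (fun z => Polynomial.X - Polynomial.C z)).prod := by
    rw [hq, Polynomial.map_multiset_prod, Multiset.map_map]
    congr 1
    refine Multiset.map_congr rfl fun z hz => ?_
    have hzim : z.im = 0 := hroots z ((Polynomial.mem_roots hp).1 hz)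
    have : ((z.re : ℂ)) = z := Complex.ext (by simp) (by simp [hzim])
    simp [Polynomial.map_sub, this]
  refine ⟨q.coeff k, ?_⟩
  conv_lhs => rw [hprod]
  rw [← hmap, Polynomial.coeff_C_mul, Polynomial.coeff_map]
  rfl

lemma coeff_sum_CX {N : ℕ} (a : ℕ → ℂ) (j : ℕ) :
    (∑ k ∈ Finset.range N, Polynomial.C (a k) * Polynomial.X ^ k).coeff j
      = if j < N then a j else 0 := by
  rw [Polynomial.finset_sum_coeff]
  simp only [Polynomial.coeff_C_mul, Polynomial.coeff_X_pow]
  rw [Finset.sum_congr rfl (fun k _ => by rw [mul_ite, mul_one, mul_zero])]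
  rw [Finset.sum_ite_eq (Finset.range N) j a]
  simp [Finset.mem_range]

lemma natDegree_sum_CX {N : ℕ} (a : ℕ → ℂ) (hN : a N ≠ 0) :
    (∑ k ∈ Finset.range (N + 1), Polynomial.C (a k) * Polynomial.X ^ k).natDegree = N ∧
    (∑ k ∈ Finset.range (N + 1), Polynomial.C (a k) * Polynomial.X ^ k).leadingCoeff = a N := by
  set p := ∑ k ∈ Finset.range (N + 1), Polynomial.C (a k) * Polynomial.X ^ k with hp
  have hle : p.natDegree ≤ N := by
    rw [Polynomial.natDegree_le_iff_coeff_eq_zero]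
    intro m hm
    rw [hp, coeff_sum_CX, if_neg (by omega)]
  have hcoeff : p.coeff N = a N := by rw [hp, coeff_sum_CX, if_pos (by omega)]
  have hge : N ≤ p.natDegree := Polynomial.le_natDegree_of_ne_zero (by rw [hcoeff]; exact hN)
  have hdeg : p.natDegree = N := le_antisymm hle hge
  exact ⟨hdeg, by rw [Polynomial.leadingCoeff, hdeg, hcoeff]⟩

/-- the key diagonal identity at `(τ, conj τ)`. -/
lemma pair_conj (hf : IsUpper (MvPolynomial.map (algebraMap ℝ ℂ) f))
    (heven : ∀ m ∈ f.support, Even (m 0) ∧ Even (m 1))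
    {n : ℕ} (hn : n = f.support.sup (fun m => m 0))
    {τ : ℂ} (hτ : τ.im ≠ 0) (hcn : (ck f n).eval τ ≠ 0) (k l : ℕ) :
    (ck f k).eval τ * (ck f l).eval ((starRingEnd ℂ) τ)
      = (ck f k).eval ((starRingEnd ℂ) τ) * (ck f l).eval τ := by
  -- polynomial p_τ
  set L := (ck f n).eval τ with hL
  set p := ∑ j ∈ Finset.range (n + 1), Polynomial.C ((ck f j).eval τ) * Polynomial.X ^ j with hp
  have hbound : ∀ m ∈ f.support, m 0 < n + 1 := fun m hm =>
    Nat.lt_succ_of_le (hn ▸ Finset.le_sup (f := fun m => m 0) hm)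
  have hpeval : ∀ z : ℂ, p.eval z = E f z τ := by
    intro z
    rw [E_grouped f (n + 1) hbound, hp]
    simp [Polynomial.eval_finset_sum]
  have hdeg := natDegree_sum_CX (fun j => (ck f j).eval τ) hcn
  have hp0 : p ≠ 0 := fun h => by
    have := hdeg.2
    rw [← hp, h] at this
    exact hcn (by simpa using this.symm)
  have hroots : ∀ z, p.eval z = 0 → z.im = 0 := by
    intro z hz
    rw [hpeval] at hz
    by_contra him
    exact step1 hf heven him hτ hz
  -- reduce to k, l ≤ n
  have hck : ∀ j, n < j → ck f j = 0 := by
    intro j hj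
    exact ck_zero (fun m hm => by have := hbound m hm; omega)
  rcases le_or_gt k n with hk | hk
  swap
  · simp [hck k hk]
  rcases le_or_gt l n with hl | hl
  swap
  · simp [hck l hl]
  obtain ⟨rk, hrk⟩ := coeff_eq_lead_mul_real hp0 hroots k
  obtain ⟨rl, hrl⟩ := coeff_eq_lead_mul_real hp0 hroots l
  have hcoeffk : p.coeff k = (ck f k).eval τ := by
    rw [hp, coeff_sum_CX, if_pos (by omega)]
  have hcoeffl : p.coeff l = (ck f l).eval τ := by
    rw [hp, coeff_sum_CX, if_pos (by omega)]
  have hlead : p.leadingCoeff = L := hdeg.2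
  rw [hcoeffk, hlead] at hrk
  rw [hcoeffl, hlead] at hrl
  rw [hrk, hrl, ← conj_ck_eval, ← conj_ck_eval, hrk, hrl]
  simp only [map_mul, Complex.conj_ofReal]
  ring



lemma prop_main (P Q D : Polynomial ℂ) (hD : D ≠ 0)
    (h : ∀ τ : ℂ, τ.im ≠ 0 → D.eval τ ≠ 0 →
      P.eval τ * Q.eval ((starRingEnd ℂ) τ) = P.eval ((starRingEnd ℂ) τ) * Q.eval τ)
    (p q : ℂ) : P.eval p * Q.eval q = P.eval q * Q.eval p := by
  have round1 : ∀ t : ℝ, t ≠ 0 → ∀ u : ℂ,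
      P.eval (u + (t : ℂ) * I) * Q.eval (u - (t : ℂ) * I)
        = P.eval (u - (t : ℂ) * I) * Q.eval (u + (t : ℂ) * I) := by
    intro t ht u
    set c : ℂ := (t : ℂ) * I with hc
    set A := P.comp (Polynomial.X + Polynomial.C c) * Q.comp (Polynomial.X - Polynomial.C c)
      - P.comp (Polynomial.X - Polynomial.C c) * Q.comp (Polynomial.X + Polynomial.C c) with hA
    have hAeval : ∀ z : ℂ, A.eval z
        = P.eval (z + c) * Q.eval (z - c) - P.eval (z - c) * Q.eval (z + c) := by
      intro z; simp [hA, Polynomial.eval_comp]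
    have hAzero : A = 0 := by
      apply Polynomial.eq_zero_of_infinite_isRoot
      have hB : D.comp (Polynomial.X + Polynomial.C c) ≠ 0 :=
        Polynomial.comp_X_add_C_ne_zero_iff.2 hD
      have hfin : Set.Finite {s : ℝ | (D.comp (Polynomial.X + Polynomial.C c)).IsRoot s} := by
        apply Set.Finite.preimage (Function.Injective.injOn Complex.ofReal_injective)
          (Polynomial.finite_setOf_isRoot hB)
      have hinf : Set.Infinite {s : ℝ | ¬ (D.comp (Polynomial.X + Polynomial.C c)).IsRoot s} := by
        simpa [Set.compl_setOf] using hfin.infinite_compl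
      have himg : Set.Infinite
          ((fun s : ℝ => (s : ℂ)) '' {s : ℝ | ¬ (D.comp (Polynomial.X + Polynomial.C c)).IsRoot s}) :=
        hinf.image (Function.Injective.injOn Complex.ofReal_injective)
      refine himg.mono ?_
      rintro z ⟨s, hs, rfl⟩
      have hDs : D.eval ((s : ℂ) + c) ≠ 0 := by
        simpa [Polynomial.IsRoot, Polynomial.eval_comp] using hs
      have hτim : ((s : ℂ) + c).im ≠ 0 := by
        simp [hc, Complex.add_im, ht]
      have hconj : (starRingEnd ℂ) ((s : ℂ) + c) = (s : ℂ) - c := by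
        simp [hc, map_add, map_mul, Complex.conj_ofReal, Complex.conj_I]
        ring
      have := h ((s : ℂ) + c) hτim hDs
      rw [hconj] at this
      show A.IsRoot (s : ℂ)
      rw [Polynomial.IsRoot, hAeval]
      rw [this]
      ring
    have h0 := hAeval u
    rw [hAzero, Polynomial.eval_zero] at h0
    exact sub_eq_zero.mp h0.symm
  -- Round 2
  have round2 : ∀ u w : ℂ, P.eval (u + w) * Q.eval (u - w) = P.eval (u - w) * Q.eval (u + w) := by
    intro u w
    set B := P.comp (Polynomial.C u + Polynomial.X) * Q.comp (Polynomial.C u - Polynomial.X)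
      - P.comp (Polynomial.C u - Polynomial.X) * Q.comp (Polynomial.C u + Polynomial.X) with hB
    have hBeval : ∀ z : ℂ, B.eval z
        = P.eval (u + z) * Q.eval (u - z) - P.eval (u - z) * Q.eval (u + z) := by
      intro z; simp [hB, Polynomial.eval_comp]
    have hBzero : B = 0 := by
      apply Polynomial.eq_zero_of_infinite_isRoot
      have hinj : Function.Injective (fun t : ℝ => (t : ℂ) * I) := by
        intro a b hab
        simpa [Complex.ext_iff] using hab
      have hinf : Set.Infinite ((fun t : ℝ => (t : ℂ) * I) '' {t : ℝ | t ≠ 0}) :=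
        (Set.Finite.infinite_compl (Set.finite_singleton (0:ℝ))).mono
          (by intro x hx; exact hx) |>.image (Function.Injective.injOn hinj)
      refine hinf.mono ?_
      rintro z ⟨t, ht, rfl⟩
      show B.IsRoot ((t : ℂ) * I)
      rw [Polynomial.IsRoot, hBeval, round1 t ht u]
      ring
    have h0 := hBeval w
    rw [hBzero, Polynomial.eval_zero] at h0
    exact sub_eq_zero.mp h0.symm
  have e1 : (p + q) / 2 + (p - q) / 2 = p := by ring
  have e2 : (p + q) / 2 - (p - q) / 2 = q := by ring
  have := round2 ((p + q) / 2) ((p - q) / 2)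
  rw [e1, e2] at this
  exact this



lemma E_aeval (a b : ℂ) : E f a b = MvPolynomial.aeval ![a, b] f := by
  rw [E, MvPolynomial.eval_map, MvPolynomial.aeval_def]

lemma vec_eta {α : Type*} (σ : Fin 2 → α) : ![σ 0, σ 1] = σ := by
  funext i
  fin_cases i <;> rfl

lemma partial_x (v₀ : ℝ) {S : Type*} [CommSemiring S] [Algebra ℝ S] (x : S) :
    Polynomial.aeval x (MvPolynomial.aeval ![Polynomial.X, Polynomial.C v₀] f)
      = MvPolynomial.aeval ![x, algebraMap ℝ S v₀] f := by
  have h : (fun i => Polynomial.aeval x (![Polynomial.X, Polynomial.C v₀] i))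
      = ![x, algebraMap ℝ S v₀] := by
    funext i; fin_cases i <;> simp
  rw [MvPolynomial.comp_aeval_apply, h]

lemma partial_y (u₀ : ℝ) {S : Type*} [CommSemiring S] [Algebra ℝ S] (y : S) :
    Polynomial.aeval y (MvPolynomial.aeval ![Polynomial.C u₀, Polynomial.X] f)
      = MvPolynomial.aeval ![algebraMap ℝ S u₀, y] f := by
  have h : (fun i => Polynomial.aeval y (![Polynomial.C u₀, Polynomial.X] i))
      = ![algebraMap ℝ S u₀, y] := by
    funext i; fin_cases i <;> simp
  rw [MvPolynomial.comp_aeval_apply, h]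

lemma E_ofReal (a b : ℝ) : E f a b = ((MvPolynomial.eval ![a, b] f : ℝ) : ℂ) := by
  have h := MvPolynomial.eval₂_comp_left (Complex.ofRealHom) (RingHom.id ℝ) ![a, b] f
  rw [MvPolynomial.eval₂_id] at h
  rw [E, MvPolynomial.eval_map]
  have h2 : (algebraMap ℝ ℂ) = Complex.ofRealHom.comp (RingHom.id ℝ) := by
    ext r; simp
  have h3 : (![(a : ℂ), (b : ℂ)] : Fin 2 → ℂ) = Complex.ofRealHom ∘ ![a, b] := by
    funext i; fin_cases i <;> simp
  rw [h2, h3, ← h]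
  rfl



lemma aeval_eq_eval (σ : Fin 2 → ℝ) (p : MvPolynomial (Fin 2) ℝ) :
    MvPolynomial.aeval σ p = MvPolynomial.eval σ p := by
  rw [MvPolynomial.aeval_def, ← MvPolynomial.eval₂_id]
  congr 1

end EvenFactor


/-- A real upper polynomial in two variables in which every variable occurs only
with even exponents factors as `g(x)·h(y)` with `g, h` real-rooted univariate
real polynomials. -/
theorem even_exponents_factor (f : MvPolynomial (Fin 2) ℝ)
    (hf : IsUpper (MvPolynomial.map (algebraMap ℝ ℂ) f))
    (heven : ∀ m ∈ f.support, Even (m 0) ∧ Even (m 1)) :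
    ∃ g h : Polynomial ℝ, g ≠ 0 ∧ h ≠ 0 ∧
      (∀ z : ℂ, Polynomial.aeval z g = 0 → z.im = 0) ∧
      (∀ z : ℂ, Polynomial.aeval z h = 0 → z.im = 0) ∧
      f = Polynomial.aeval (MvPolynomial.X 0) g * Polynomial.aeval (MvPolynomial.X 1) h := by
  classical
  open EvenFactor in
  have hf0 : f ≠ 0 := by
    intro h0
    have := hf ![Complex.I, Complex.I] (by intro i; fin_cases i <;> simp)
    rw [h0] at this
    simp at this
  have hsupp : f.support.Nonempty := MvPolynomial.support_nonempty.2 hf0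
  obtain ⟨m₀, hm₀, hm₀'⟩ := Finset.exists_mem_eq_sup f.support hsupp (fun m => m 0)
  set n := f.support.sup (fun m => m 0) with hn
  have hcn0 : EvenFactor.ck f n ≠ 0 := by
    rw [hm₀']
    exact EvenFactor.ck_ne_zero hm₀
  have pair_all : ∀ k l (p q : ℂ),
      (EvenFactor.ck f k).eval p * (EvenFactor.ck f l).eval q
        = (EvenFactor.ck f k).eval q * (EvenFactor.ck f l).eval p := by
    intro k l p q
    exact EvenFactor.prop_main _ _ _ hcn0
      (fun τ hτ hD => EvenFactor.pair_conj hf heven hn hτ hD k l) p q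
  have hbound : ∀ m ∈ f.support, m 0 < n + 1 := fun m hm =>
    Nat.lt_succ_of_le (hn ▸ Finset.le_sup (f := fun m => m 0) hm)
  have Estar : ∀ a b u v : ℂ,
      EvenFactor.E f a b * EvenFactor.E f u v = EvenFactor.E f a v * EvenFactor.E f u b := by
    intro a b u v
    rw [EvenFactor.E_grouped f (n+1) hbound a b, EvenFactor.E_grouped f (n+1) hbound u v,
      EvenFactor.E_grouped f (n+1) hbound a v, EvenFactor.E_grouped f (n+1) hbound u b]
    rw [Finset.sum_mul_sum, Finset.sum_mul_sum]
    refine Finset.sum_congr rfl fun k _ => Finset.sum_congr rfl fun l _ => ?_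
    have hkl := pair_all k l b v
    calc (EvenFactor.ck f k).eval b * a ^ k * ((EvenFactor.ck f l).eval v * u ^ l)
        = ((EvenFactor.ck f k).eval b * (EvenFactor.ck f l).eval v) * (a ^ k * u ^ l) := by ring
      _ = ((EvenFactor.ck f k).eval v * (EvenFactor.ck f l).eval b) * (a ^ k * u ^ l) := by
          rw [hkl]
      _ = (EvenFactor.ck f k).eval v * a ^ k * ((EvenFactor.ck f l).eval b * u ^ l) := by ring
  -- a real point where f does not vanish
  have hexist : ∃ σ : Fin 2 → ℝ, MvPolynomial.eval σ f ≠ 0 := by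
    by_contra hcon
    push_neg at hcon
    exact hf0 (MvPolynomial.funext fun x => by simp [hcon x])
  obtain ⟨σ₀, hσ₀⟩ := hexist
  set u₀ := σ₀ 0 with hu₀
  set v₀ := σ₀ 1 with hv₀
  set k₀ := MvPolynomial.eval ![u₀, v₀] f with hk₀def
  have hk₀ : k₀ ≠ 0 := by
    rw [hk₀def, hu₀, hv₀, EvenFactor.vec_eta σ₀]
    exact hσ₀
  have hk₀C : EvenFactor.E f u₀ v₀ = (k₀ : ℂ) := by
    rw [EvenFactor.E_ofReal, hk₀def]
  have hk₀C' : EvenFactor.E f u₀ v₀ ≠ 0 := by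
    rw [hk₀C]
    exact_mod_cast hk₀
  -- the factors
  set g : Polynomial ℝ := MvPolynomial.aeval ![Polynomial.X, Polynomial.C v₀] f with hgdef
  set h : Polynomial ℝ :=
    Polynomial.C k₀⁻¹ * MvPolynomial.aeval ![Polynomial.C u₀, Polynomial.X] f with hhdef
  have hgz : ∀ z : ℂ, Polynomial.aeval z g = EvenFactor.E f z v₀ := by
    intro z
    rw [hgdef, EvenFactor.partial_x, EvenFactor.E_aeval]
    norm_num
  have hhz : ∀ z : ℂ, Polynomial.aeval z h = (k₀ : ℂ)⁻¹ * EvenFactor.E f u₀ z := by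
    intro z
    rw [hhdef, map_mul, Polynomial.aeval_C, EvenFactor.partial_y, EvenFactor.E_aeval]
    norm_num
  have hg0 : g ≠ 0 := by
    intro hg
    have := hgz u₀
    rw [hg, map_zero] at this
    rw [hk₀C] at this
    exact (Complex.ofReal_ne_zero.2 hk₀) this.symm
  have hh0 : h ≠ 0 := by
    intro hh
    have := hhz v₀
    rw [hh, map_zero, hk₀C] at this
    have : (1 : ℂ) = 0 := by
      rw [inv_mul_cancel₀ (by exact_mod_cast hk₀ : (k₀ : ℂ) ≠ 0)] at this
      exact this.symm ▸ rfl
    simp at this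
  have hgroot : ∀ z : ℂ, Polynomial.aeval z g = 0 → z.im = 0 := by
    intro z hz
    rw [hgz] at hz
    have hallb : ∀ b : ℂ, EvenFactor.E f z b = 0 := by
      intro b
      have h1 := Estar z b u₀ v₀
      rw [hz, zero_mul] at h1
      exact (mul_eq_zero.1 h1).resolve_right hk₀C'
    by_contra him
    rcases (Ne.lt_or_gt him) with h1 | h1
    · have hconj := EvenFactor.conj_E f z (-Complex.I)
      rw [hallb (-Complex.I), map_zero] at hconj
      refine EvenFactor.E_upper hf (a := (starRingEnd ℂ) z) (b := (starRingEnd ℂ) (-Complex.I))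
        ?_ ?_ hconj.symm
      · simpa using h1
      · simp
    · exact EvenFactor.E_upper hf h1 (by simp : (0:ℝ) < Complex.I.im) (hallb Complex.I)
  have hhroot : ∀ z : ℂ, Polynomial.aeval z h = 0 → z.im = 0 := by
    intro z hz
    rw [hhz] at hz
    have hz' : EvenFactor.E f u₀ z = 0 := by
      rcases mul_eq_zero.1 hz with h1 | h1
      · exact absurd h1 (inv_ne_zero (by exact_mod_cast hk₀))
      · exact h1
    have halla : ∀ a : ℂ, EvenFactor.E f a z = 0 := by
      intro a
      have h1 := Estar a z u₀ v₀
      rw [hz', mul_zero] at h1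
      exact (mul_eq_zero.1 h1).resolve_right hk₀C'
    by_contra him
    rcases (Ne.lt_or_gt him) with h1 | h1
    · have hconj := EvenFactor.conj_E f (-Complex.I) z
      rw [halla (-Complex.I), map_zero] at hconj
      refine EvenFactor.E_upper hf (a := (starRingEnd ℂ) (-Complex.I)) (b := (starRingEnd ℂ) z)
        ?_ ?_ hconj.symm
      · simp
      · simpa using h1
    · exact EvenFactor.E_upper hf (by simp : (0:ℝ) < Complex.I.im) h1 (halla Complex.I)
  refine ⟨g, h, hg0, hh0, hgroot, hhroot, ?_⟩
  apply MvPolynomial.funext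
  intro σ
  rw [map_mul]
  have e1 : MvPolynomial.eval σ (Polynomial.aeval (MvPolynomial.X 0) g)
      = Polynomial.eval (σ 0) g := by
    rw [← EvenFactor.aeval_eq_eval σ,
      ← Polynomial.aeval_algHom_apply (MvPolynomial.aeval σ) (MvPolynomial.X 0) g,
      MvPolynomial.aeval_X]
    exact congrFun (Polynomial.coe_aeval_eq_eval (σ 0)) g
  have e2 : MvPolynomial.eval σ (Polynomial.aeval (MvPolynomial.X 1) h)
      = Polynomial.eval (σ 1) h := by
    rw [← EvenFactor.aeval_eq_eval σ,
      ← Polynomial.aeval_algHom_apply (MvPolynomial.aeval σ) (MvPolynomial.X 1) h,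
      MvPolynomial.aeval_X]
    exact congrFun (Polynomial.coe_aeval_eq_eval (σ 1)) h
  have e3 : Polynomial.eval (σ 0) g = MvPolynomial.eval ![σ 0, v₀] f := by
    rw [← congrFun (Polynomial.coe_aeval_eq_eval (σ 0)) g, hgdef, EvenFactor.partial_x,
      EvenFactor.aeval_eq_eval]
    norm_num
  have e4 : Polynomial.eval (σ 1) h = k₀⁻¹ * MvPolynomial.eval ![u₀, σ 1] f := by
    rw [hhdef, Polynomial.eval_mul, Polynomial.eval_C]
    congr 1
    rw [← congrFun (Polynomial.coe_aeval_eq_eval (σ 1)) _, EvenFactor.partial_y,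
      EvenFactor.aeval_eq_eval]
    norm_num
  have hsR : MvPolynomial.eval σ f * k₀
      = MvPolynomial.eval ![σ 0, v₀] f * MvPolynomial.eval ![u₀, σ 1] f := by
    have hstar := Estar (σ 0) (σ 1) u₀ v₀
    rw [EvenFactor.E_ofReal, EvenFactor.E_ofReal, EvenFactor.E_ofReal, EvenFactor.E_ofReal]
      at hstar
    rw [EvenFactor.vec_eta σ] at hstar
    exact_mod_cast hstar
  rw [e1, e2, e3, e4]
  field_simp
  linear_combination hsR
end
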